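/- arXiv:2006.02223 — 4 statements merged into one kernel-verified Lean document; each statement's English description precedes it below -/
import Mathlib

section
/- Let A be an additive category with an additive endofunctor Σ and a class Θ of (n+2)-Σ-sequences satisfying axioms (RN1), (RN2) and (RN3). For every right (n+2)-angle A_0 --f_0--> A_1 --f_1--> A_2 → ⋯ --f_{n-1}--> A_n --f_n--> A_{n+1} --f_{n+1}--> ΣA_0 in Θ, one has f_i ∘ f_{i−1} = 0 for all i = 1, 2, …, n+1; that is, any composition of two consecutive morphisms in a right (n+2)-angle vanishes. -/
open CategoryTheory CategoryTheory.Limits Opposite ZeroObject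

universe v u

/-- A sequence of composable morphisms in `C`, indexed by `ℕ`.
For a complex of length `n+2` we only use the objects `0,…,n+1` and maps `0,…,n`. -/
structure ExSeq (C : Type u) [Category.{v} C] : Type max u v where
  obj : ℕ → C
  map : ∀ i : ℕ, obj i ⟶ obj (i + 1)

/-- A morphism of sequences, where only the components `0,…,n+1` (and the
commutativity of the squares involving the maps `0,…,n`) are relevant. -/
structure ExSeqHom {C : Type u} [Category.{v} C] (n : ℕ) (X Y : ExSeq C) :
    Type max u v where
  hom : ∀ i, X.obj i ⟶ Y.obj i
  comm : ∀ i, i ≤ n → X.map i ≫ hom (i + 1) = hom i ≫ Y.map i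

/-- The data of an `n`-exangulated category: an additive bifunctor
`E : Cᵒᵖ × C ⥤ Ab` together with a predicate singling out the distinguished
`n`-exangles, i.e. the pairs `⟨X, δ⟩` with `s(δ) = [X]`. -/
structure ExData (n : ℕ) (C : Type u) [Category.{v} C] [Preadditive C] :
    Type max u (v + 1) where
  E : Cᵒᵖ ⥤ C ⥤ AddCommGrpCat.{v}
  Dist : ∀ X : ExSeq C, ((E.obj (op (X.obj (n + 1)))).obj (X.obj 0)) → Prop

namespace ExData

variable {n : ℕ} {C : Type u} [Category.{v} C] [Preadditive C] (S : ExData n C)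

/-- `S.Ext Cc A` is the group `E(Cc, A)` of `E`-extensions. -/
abbrev Ext (Cc A : C) : Type v := (S.E.obj (op Cc)).obj A

/-- `a_* δ`, the pushforward of an `E`-extension along `a : A ⟶ A'`. -/
def push {Cc A A' : C} (a : A ⟶ A') (δ : S.Ext Cc A) : S.Ext Cc A' :=
  ((S.E.obj (op Cc)).map a) δ

/-- `c^* δ`, the pullback of an `E`-extension along `c : Cc' ⟶ Cc`. -/
def pull {Cc' Cc A : C} (c : Cc' ⟶ Cc) (δ : S.Ext Cc A) : S.Ext Cc' A :=
  ((S.E.map c.op).app A) δ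

/-- `f` is an inflation if it occurs as the `0`-th differential of a
distinguished `n`-exangle. -/
def IsInflation {A B : C} (f : A ⟶ B) : Prop :=
  ∃ (X : ExSeq C) (δ : S.Ext (X.obj (n + 1)) (X.obj 0)), S.Dist X δ ∧
    ∃ (h0 : X.obj 0 = A) (h1 : X.obj 1 = B),
      X.map 0 = eqToHom h0 ≫ f ≫ eqToHom h1.symm

/-- `f` is a deflation if it occurs as the `n`-th differential of a
distinguished `n`-exangle. -/
def IsDeflation {A B : C} (f : A ⟶ B) : Prop :=
  ∃ (X : ExSeq C) (δ : S.Ext (X.obj (n + 1)) (X.obj 0)), S.Dist X δ ∧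
    ∃ (h0 : X.obj n = A) (h1 : X.obj (n + 1) = B),
      X.map n = eqToHom h0 ≫ f ≫ eqToHom h1.symm

/-- Projective objects. -/
def Proj (P : C) : Prop :=
  ∀ (X : ExSeq C) (δ : S.Ext (X.obj (n + 1)) (X.obj 0)), S.Dist X δ →
    ∀ c : P ⟶ X.obj (n + 1), ∃ b : P ⟶ X.obj n, b ≫ X.map n = c

/-- Injective objects. -/
def Inj (I : C) : Prop :=
  ∀ (X : ExSeq C) (δ : S.Ext (X.obj (n + 1)) (X.obj 0)), S.Dist X δ →
    ∀ c : X.obj 0 ⟶ I, ∃ b : X.obj 1 ⟶ I, X.map 0 ≫ b = c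

/-- `C` has enough projectives. -/
def EnoughProj : Prop :=
  ∀ Cc : C, ∃ (X : ExSeq C) (δ : S.Ext (X.obj (n + 1)) (X.obj 0)),
    S.Dist X δ ∧ X.obj (n + 1) = Cc ∧ ∀ i, 1 ≤ i → i ≤ n → S.Proj (X.obj i)

/-- `C` has enough injectives. -/
def EnoughInj : Prop :=
  ∀ A : C, ∃ (X : ExSeq C) (δ : S.Ext (X.obj (n + 1)) (X.obj 0)),
    S.Dist X δ ∧ X.obj 0 = A ∧ ∀ i, 1 ≤ i → i ≤ n → S.Inj (X.obj i)

end ExData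

section Cone

variable (n : ℕ) {C : Type u} [Category.{v} C] [Preadditive C] [HasBinaryBiproducts C]

/-- `M` is the mapping cone of a morphism `f : X ⟶ Y` of `n`-exangles whose
`0`-th component is (up to the identifications) an identity. -/
structure IsCone {X Y : ExSeq C} (f : ExSeqHom n X Y) (M : ExSeq C) : Prop where
  h0 : M.obj 0 = X.obj 1
  hlast : M.obj (n + 1) = Y.obj (n + 1)
  hmid : ∀ i, i + 1 ≤ n → M.obj (i + 1) = (X.obj (i + 2) ⊞ Y.obj (i + 1))
  map0 : ∀ h : 1 ≤ n, M.map 0 =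
    eqToHom h0 ≫ biprod.lift (-(X.map 1)) (f.hom 1) ≫ eqToHom (hmid 0 h).symm
  mapmid : ∀ i (h : i + 2 ≤ n), M.map (i + 1) =
    eqToHom (hmid i (by omega)) ≫
      biprod.desc (biprod.lift (-(X.map (i + 2))) (f.hom (i + 2)))
        (biprod.lift 0 (Y.map (i + 1))) ≫ eqToHom (hmid (i + 1) h).symm
  maplast : ∀ i (h : i + 1 = n), M.map (i + 1) =
    eqToHom (hmid i (by omega)) ≫ biprod.desc (f.hom (i + 2)) (Y.map (i + 1)) ≫
      eqToHom (show Y.obj (i + 2) = M.obj (i + 2) from by subst h; exact hlast.symm)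

/-- `N` is the mapping cocone of a morphism `g : Y ⟶ X` of `n`-exangles whose
`(n+1)`-st component is (up to the identifications) an identity. -/
structure IsCocone {Y X : ExSeq C} (g : ExSeqHom n Y X) (N : ExSeq C) : Prop where
  h0 : N.obj 0 = Y.obj 0
  hlast : N.obj (n + 1) = X.obj n
  hmid : ∀ i, i + 1 ≤ n → N.obj (i + 1) = (Y.obj (i + 1) ⊞ X.obj i)
  map0 : ∀ h : 1 ≤ n, N.map 0 =
    eqToHom h0 ≫ biprod.lift (-(Y.map 0)) (g.hom 0) ≫ eqToHom (hmid 0 h).symm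
  mapmid : ∀ i (h : i + 2 ≤ n), N.map (i + 1) =
    eqToHom (hmid i (by omega)) ≫
      biprod.desc (biprod.lift (-(Y.map (i + 1))) (g.hom (i + 1)))
        (biprod.lift 0 (X.map i)) ≫ eqToHom (hmid (i + 1) h).symm
  maplast : ∀ i (h : i + 1 = n), N.map (i + 1) =
    eqToHom (hmid i (by omega)) ≫ biprod.desc (g.hom (i + 1)) (X.map i) ≫
      eqToHom (show X.obj (i + 1) = N.obj (i + 2) from by subst h; exact hlast.symm)

end Cone

/-- The axioms (R0), (R1), (R2), (EA1), (EA2), (EA2ᵒᵖ) for the data of an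
`n`-exangulated category, following Herschend–Liu–Nakaoka. -/
structure IsExangulated {n : ℕ} {C : Type u} [Category.{v} C] [Preadditive C]
    [HasBinaryBiproducts C] (S : ExData n C) : Prop where
  /-- `E` is additive in the contravariant variable. -/
  additive_left : S.E.Additive
  /-- `E` is additive in the covariant variable. -/
  additive_right : ∀ X : Cᵒᵖ, (S.E.obj X).Additive
  /-- every `E`-extension admits a realization. -/
  realize : ∀ (A Cc : C) (δ : S.Ext Cc A), ∃ (X : ExSeq C)
    (h0 : X.obj 0 = A) (h1 : X.obj (n + 1) = Cc),
      S.Dist X (S.push (eqToHom h0.symm) (S.pull (eqToHom h1) δ))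
  /-- (R0): morphisms of `E`-extensions lift to morphisms of realizations. -/
  lift : ∀ (X Y : ExSeq C) (δX : S.Ext (X.obj (n + 1)) (X.obj 0))
    (δY : S.Ext (Y.obj (n + 1)) (Y.obj 0)), S.Dist X δX → S.Dist Y δY →
    ∀ (a : X.obj 0 ⟶ Y.obj 0) (c : X.obj (n + 1) ⟶ Y.obj (n + 1)),
      S.push a δX = S.pull c δY →
      ∃ f : ExSeqHom n X Y, f.hom 0 = a ∧ f.hom (n + 1) = c
  /-- (R1), covariant part, middle. -/
  ex_cov_mid : ∀ (X : ExSeq C) (δ : S.Ext (X.obj (n + 1)) (X.obj 0)), S.Dist X δ →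
    ∀ i, i + 1 ≤ n → ∀ (Z : C) (g : Z ⟶ X.obj (i + 1)),
      (g ≫ X.map (i + 1) = 0 ↔ ∃ h : Z ⟶ X.obj i, h ≫ X.map i = g)
  /-- (R1), covariant part, last position. -/
  ex_cov_last : ∀ (X : ExSeq C) (δ : S.Ext (X.obj (n + 1)) (X.obj 0)), S.Dist X δ →
    ∀ (Z : C) (g : Z ⟶ X.obj (n + 1)),
      (S.pull g δ = 0 ↔ ∃ h : Z ⟶ X.obj n, h ≫ X.map n = g)
  /-- (R1), contravariant part, middle. -/
  ex_con_mid : ∀ (X : ExSeq C) (δ : S.Ext (X.obj (n + 1)) (X.obj 0)), S.Dist X δ →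
    ∀ i, i + 1 ≤ n → ∀ (Z : C) (g : X.obj (i + 1) ⟶ Z),
      (X.map i ≫ g = 0 ↔ ∃ h : X.obj (i + 2) ⟶ Z, X.map (i + 1) ≫ h = g)
  /-- (R1), contravariant part, last position. -/
  ex_con_last : ∀ (X : ExSeq C) (δ : S.Ext (X.obj (n + 1)) (X.obj 0)), S.Dist X δ →
    ∀ (Z : C) (g : X.obj 0 ⟶ Z),
      (S.push g δ = 0 ↔ ∃ h : X.obj 1 ⟶ Z, X.map 0 ≫ h = g)
  /-- (R2): the trivial complex `A = A → 0 → ⋯ → 0` realizes `0 ∈ E(0, A)`. -/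
  r2 : ∀ A : C, ∃ (X : ExSeq C) (h0 : X.obj 0 = A) (h1 : X.obj 1 = A),
    X.map 0 = eqToHom (h0.trans h1.symm) ∧
    (∀ i, 2 ≤ i → i ≤ n + 1 → IsZero (X.obj i)) ∧ S.Dist X 0
  /-- (R2)ᵒᵖ: the trivial complex `0 → ⋯ → 0 → A = A` realizes `0 ∈ E(A, 0)`. -/
  r2' : ∀ A : C, ∃ (X : ExSeq C) (h0 : X.obj n = A) (h1 : X.obj (n + 1) = A),
    X.map n = eqToHom (h0.trans h1.symm) ∧
    (∀ i, i + 1 ≤ n → IsZero (X.obj i)) ∧ S.Dist X 0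
  /-- (EA1): inflations are closed under composition. -/
  comp_infl : ∀ {A B D : C} (f : A ⟶ B) (g : B ⟶ D),
    S.IsInflation f → S.IsInflation g → S.IsInflation (f ≫ g)
  /-- (EA1): deflations are closed under composition. -/
  comp_defl : ∀ {A B D : C} (f : A ⟶ B) (g : B ⟶ D),
    S.IsDeflation f → S.IsDeflation g → S.IsDeflation (f ≫ g)
  /-- (EA2): good lifts of `(id, c)` exist. -/
  ea2 : ∀ (X Y : ExSeq C) (ρ : S.Ext (Y.obj (n + 1)) (Y.obj 0))
    (hA : X.obj 0 = Y.obj 0) (c : X.obj (n + 1) ⟶ Y.obj (n + 1)),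
    S.Dist Y ρ → S.Dist X (S.push (eqToHom hA.symm) (S.pull c ρ)) →
    ∃ (f : ExSeqHom n X Y) (_ : f.hom 0 = eqToHom hA) (_ : f.hom (n + 1) = c)
      (M : ExSeq C) (hM : IsCone n f M),
      S.Dist M (S.push (eqToHom hM.h0.symm)
        (S.pull (eqToHom hM.hlast) (S.push (eqToHom hA.symm ≫ X.map 0) ρ)))
  /-- (EA2)ᵒᵖ: good lifts of `(a, id)` exist. -/
  ea2op : ∀ (Y X : ExSeq C) (ρ : S.Ext (Y.obj (n + 1)) (Y.obj 0))
    (hC : Y.obj (n + 1) = X.obj (n + 1)) (a : Y.obj 0 ⟶ X.obj 0),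
    S.Dist Y ρ → S.Dist X (S.push a (S.pull (eqToHom hC.symm) ρ)) →
    ∃ (g : ExSeqHom n Y X) (_ : g.hom 0 = a) (_ : g.hom (n + 1) = eqToHom hC)
      (N : ExSeq C) (hN : IsCocone n g N),
      S.Dist N (S.push (eqToHom hN.h0.symm)
        (S.pull (eqToHom hN.hlast ≫ X.map n ≫ eqToHom hC.symm) ρ))
section Quot

variable {C : Type u} [Category.{v} C] [Preadditive C] [HasZeroObject C]
  [HasBinaryBiproducts C]

/-- A (full) additive subcategory of `C`, given by a class of objects closed
under isomorphisms, finite direct sums and containing the zero objects. -/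
structure AddSubcat (C : Type u) [Category.{v} C] [Preadditive C]
    [HasZeroObject C] [HasBinaryBiproducts C] : Type max u v where
  mem : C → Prop
  zero_mem : ∀ Z : C, IsZero Z → mem Z
  iso_mem : ∀ {A B : C}, (A ≅ B) → mem A → mem B
  sum_mem : ∀ {A B : C}, mem A → mem B → mem (A ⊞ B)

variable (𝒳 : AddSubcat C)

/-- `f : A ⟶ B` is `𝒳`-monic. -/
def XMonic {A B : C} (f : A ⟶ B) : Prop :=
  ∀ M : C, 𝒳.mem M → ∀ g : A ⟶ M, ∃ h : B ⟶ M, f ≫ h = g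

/-- `f : A ⟶ B` is `𝒳`-epic. -/
def XEpic {A B : C} (f : A ⟶ B) : Prop :=
  ∀ M : C, 𝒳.mem M → ∀ g : M ⟶ B, ∃ h : M ⟶ A, h ≫ f = g

/-- `f : A ⟶ B` is a left `𝒳`-approximation of `A`. -/
def LeftApprox {A B : C} (f : A ⟶ B) : Prop := 𝒳.mem B ∧ XMonic 𝒳 f

/-- `f : A ⟶ B` is a right `𝒳`-approximation of `B`. -/
def RightApprox {A B : C} (f : A ⟶ B) : Prop := 𝒳.mem A ∧ XEpic 𝒳 f

/-- The ideal `[𝒳](A,B)` of morphisms factoring through an object of `𝒳`. -/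
def homIdeal (A B : C) : AddSubgroup (A ⟶ B) where
  carrier := {f | ∃ M : C, 𝒳.mem M ∧ ∃ (g : A ⟶ M) (h : M ⟶ B), g ≫ h = f}
  zero_mem' := ⟨(0 : C), 𝒳.zero_mem (0 : C) (isZero_zero C), 0, 0, by simp⟩
  add_mem' := by
    rintro f f' ⟨M, hM, g, h, rfl⟩ ⟨M', hM', g', h', rfl⟩
    exact ⟨M ⊞ M', 𝒳.sum_mem hM hM', biprod.lift g g', biprod.desc h h', by simp⟩
  neg_mem' := by
    rintro f ⟨M, hM, g, h, rfl⟩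
    exact ⟨M, hM, -g, h, by simp⟩

lemma homIdeal.comp_right {A B B' : C} {f : A ⟶ B} (hf : f ∈ homIdeal 𝒳 A B)
    (u : B ⟶ B') : f ≫ u ∈ homIdeal 𝒳 A B' := by
  obtain ⟨M, hM, g, h, rfl⟩ := hf
  exact ⟨M, hM, g, h ≫ u, by simp⟩

lemma homIdeal.comp_left {A' A B : C} {f : A ⟶ B} (hf : f ∈ homIdeal 𝒳 A B)
    (u : A' ⟶ A) : u ≫ f ∈ homIdeal 𝒳 A' B := by
  obtain ⟨M, hM, g, h, rfl⟩ := hf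
  exact ⟨M, hM, u ≫ g, h, by simp⟩

/-- The objects of the quotient category `C/𝒳`. -/
@[ext]
structure QuotObj (𝒳 : AddSubcat C) : Type u where
  as : C

/-- The quotient (additive) category `C/𝒳`. -/
instance QuotObj.category : Category.{v} (QuotObj 𝒳) where
  Hom A B := (A.as ⟶ B.as) ⧸ homIdeal 𝒳 A.as B.as
  id A := QuotientAddGroup.mk (𝟙 A.as)
  comp {A B D} f g := Quotient.liftOn₂ f g
    (fun f g => QuotientAddGroup.mk (f ≫ g))
    (by
      intro a₁ a₂ b₁ b₂ h₁ h₂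
      replace h₁ := QuotientAddGroup.leftRel_apply.mp h₁
      replace h₂ := QuotientAddGroup.leftRel_apply.mp h₂
      show QuotientAddGroup.mk (a₁ ≫ a₂) = QuotientAddGroup.mk (b₁ ≫ b₂)
      rw [QuotientAddGroup.eq]
      have heq : -(a₁ ≫ a₂) + b₁ ≫ b₂ =
          (-a₁ + b₁) ≫ a₂ + b₁ ≫ (-a₂ + b₂) := by
        simp only [Preadditive.add_comp, Preadditive.comp_add,
          Preadditive.neg_comp, Preadditive.comp_neg]
        abel
      rw [heq]
      exact (homIdeal 𝒳 _ _).add_mem (homIdeal.comp_right 𝒳 h₁ a₂)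
        (homIdeal.comp_left 𝒳 h₂ b₁))
  id_comp f := by
    induction f using Quotient.inductionOn
    exact congrArg _ (Category.id_comp _)
  comp_id f := by
    induction f using Quotient.inductionOn
    exact congrArg _ (Category.comp_id _)
  assoc f g h := by
    induction f using Quotient.inductionOn
    induction g using Quotient.inductionOn
    induction h using Quotient.inductionOn
    exact congrArg _ (Category.assoc _ _ _)

instance QuotObj.preadditive : Preadditive (QuotObj 𝒳) where
  homGroup A B := inferInstanceAs (AddCommGroup ((A.as ⟶ B.as) ⧸ homIdeal 𝒳 A.as B.as))
  add_comp A B D f f' g := by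
    induction f using Quotient.inductionOn
    induction f' using Quotient.inductionOn
    induction g using Quotient.inductionOn
    exact congrArg _ (Preadditive.add_comp _ _ _ _ _ _)
  comp_add A B D f g g' := by
    induction f using Quotient.inductionOn
    induction g using Quotient.inductionOn
    induction g' using Quotient.inductionOn
    exact congrArg _ (Preadditive.comp_add _ _ _ _ _ _)

/-- The quotient functor `C ⥤ C/𝒳`. -/
def quotFunctor : C ⥤ QuotObj 𝒳 where
  obj A := ⟨A⟩
  map f := QuotientAddGroup.mk f
  map_id _ := rfl
  map_comp _ _ := rfl

end Quot

section QuotBiprod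

variable {C : Type u} [Category.{v} C] [Preadditive C] [HasZeroObject C]
  [HasBinaryBiproducts C] (𝒳 : AddSubcat C)

instance QuotObj.hasBinaryBiproducts : HasBinaryBiproducts (QuotObj 𝒳) := by
  apply HasBinaryBiproducts.mk
  intro A B
  apply HasBinaryBiproduct.mk
  refine ⟨{ pt := ⟨A.as ⊞ B.as⟩
            fst := QuotientAddGroup.mk biprod.fst
            snd := QuotientAddGroup.mk biprod.snd
            inl := QuotientAddGroup.mk biprod.inl
            inr := QuotientAddGroup.mk biprod.inr
            inl_fst := ?_, inl_snd := ?_, inr_fst := ?_, inr_snd := ?_ }, ?_⟩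
  · show QuotientAddGroup.mk (biprod.inl ≫ biprod.fst) =
      QuotientAddGroup.mk (𝟙 A.as)
    rw [biprod.inl_fst]
  · show QuotientAddGroup.mk (biprod.inl ≫ biprod.snd) = _
    rw [biprod.inl_snd]; rfl
  · show QuotientAddGroup.mk (biprod.inr ≫ biprod.fst) = _
    rw [biprod.inr_fst]; rfl
  · show QuotientAddGroup.mk (biprod.inr ≫ biprod.snd) =
      QuotientAddGroup.mk (𝟙 B.as)
    rw [biprod.inr_snd]
  · apply isBinaryBilimitOfTotal
    show QuotientAddGroup.mk (biprod.fst ≫ biprod.inl) +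
        QuotientAddGroup.mk (biprod.snd ≫ biprod.inr) =
      QuotientAddGroup.mk (𝟙 (A.as ⊞ B.as))
    rw [show QuotientAddGroup.mk (biprod.fst ≫ biprod.inl) + QuotientAddGroup.mk (biprod.snd ≫ biprod.inr) = (QuotientAddGroup.mk (biprod.fst ≫ biprod.inl + biprod.snd ≫ biprod.inr) : (⟨A.as ⊞ B.as⟩ : QuotObj 𝒳) ⟶ ⟨A.as ⊞ B.as⟩) from rfl]
    rw [biprod.total]

end QuotBiprod
section NAbelian

variable (n : ℕ) {C : Type u} [Category.{v} C] [Preadditive C]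

/-- `g` is a weak cokernel of `f`. -/
def IsWeakCokernel {A B D : C} (f : A ⟶ B) (g : B ⟶ D) : Prop :=
  f ≫ g = 0 ∧ ∀ (Z : C) (h : B ⟶ Z), f ≫ h = 0 → ∃ p : D ⟶ Z, g ≫ p = h

/-- `f` is a weak kernel of `g`. -/
def IsWeakKernel {A B D : C} (f : A ⟶ B) (g : B ⟶ D) : Prop :=
  f ≫ g = 0 ∧ ∀ (Z : C) (h : Z ⟶ B), h ≫ g = 0 → ∃ p : Z ⟶ A, p ≫ f = h

/-- The sequence `S.obj 1 → ⋯ → S.obj (n+1)` is an `n`-cokernel of `S.map 0`,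
i.e. `0 → (S_{n+1}, B) → ⋯ → (S_1, B) → (S_0, B)` is exact for every `B`. -/
def IsNCokernelOf (S : ExSeq C) : Prop :=
  (∀ i, i + 1 ≤ n → ∀ (Z : C) (h : S.obj (i + 1) ⟶ Z),
    (S.map i ≫ h = 0 ↔ ∃ p : S.obj (i + 2) ⟶ Z, S.map (i + 1) ≫ p = h)) ∧
  (∀ (Z : C) (g : S.obj (n + 1) ⟶ Z), S.map n ≫ g = 0 → g = 0)

/-- The sequence `S.obj 0 → ⋯ → S.obj n` is an `n`-kernel of `S.map n`,
i.e. `0 → (B, S_0) → ⋯ → (B, S_n) → (B, S_{n+1})` is exact for every `B`. -/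
def IsNKernelOf (S : ExSeq C) : Prop :=
  (∀ i, i + 1 ≤ n → ∀ (Z : C) (h : Z ⟶ S.obj (i + 1)),
    (h ≫ S.map (i + 1) = 0 ↔ ∃ p : Z ⟶ S.obj i, p ≫ S.map i = h)) ∧
  (∀ (Z : C) (g : Z ⟶ S.obj 0), g ≫ S.map 0 = 0 → g = 0)

/-- `n`-exact sequences. -/
def IsNExactSeq (S : ExSeq C) : Prop := IsNCokernelOf n S ∧ IsNKernelOf n S

/-- The sequence `S` starts with (a copy of) the morphism `f`. -/
def ExSeq.startsWith (S : ExSeq C) {A B : C} (f : A ⟶ B) : Prop :=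
  ∃ (h0 : S.obj 0 = A) (h1 : S.obj 1 = B), S.map 0 = eqToHom h0 ≫ f ≫ eqToHom h1.symm

/-- The sequence `S` ends (at position `n`) with (a copy of) the morphism `f`. -/
def ExSeq.endsWith (n : ℕ) (S : ExSeq C) {A B : C} (f : A ⟶ B) : Prop :=
  ∃ (h0 : S.obj n = A) (h1 : S.obj (n + 1) = B),
    S.map n = eqToHom h0 ≫ f ≫ eqToHom h1.symm

/-- `n`-abelian category, following Jasso: an additive category with split
idempotents in which every morphism has an `n`-kernel and an `n`-cokernel,
every monomorphism is the `0`-th morphism of an `n`-exact sequence, and every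
epimorphism is the `n`-th morphism of an `n`-exact sequence. -/
structure IsNAbelian (n : ℕ) (D : Type u) [Category.{v} D] [Preadditive D] : Prop where
  hasFiniteBiproducts : HasFiniteBiproducts D
  idemSplit : IsIdempotentComplete D
  hasNCokernels : ∀ {A B : D} (f : A ⟶ B),
    ∃ S : ExSeq D, S.startsWith f ∧ IsNCokernelOf n S
  hasNKernels : ∀ {A B : D} (f : A ⟶ B),
    ∃ S : ExSeq D, S.endsWith n f ∧ IsNKernelOf n S
  monoIsNExact : ∀ {A B : D} (f : A ⟶ B), Mono f →
    ∃ S : ExSeq D, S.startsWith f ∧ IsNExactSeq n S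
  epiIsNExact : ∀ {A B : D} (f : A ⟶ B), Epi f →
    ∃ S : ExSeq D, S.endsWith n f ∧ IsNExactSeq n S

end NAbelian

section ClusterTilting

variable {n : ℕ} {C : Type u} [Category.{v} C] [Preadditive C] [HasZeroObject C]
  [HasBinaryBiproducts C]

/-- A cluster tilting subcategory of an `n`-exangulated category. -/
def ExData.ClusterTilting (S : ExData n C) (𝒳 : AddSubcat C) : Prop :=
  (∀ X X' : C, 𝒳.mem X → 𝒳.mem X' → ∀ δ : S.Ext X X', δ = 0) ∧
  (∀ Cc : C, ∃ (X : ExSeq C) (δ : S.Ext (X.obj (n + 1)) (X.obj 0)),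
    S.Dist X δ ∧ X.obj (n + 1) = Cc ∧ ∀ i, i ≤ n → 𝒳.mem (X.obj i)) ∧
  (∀ A : C, ∃ (X : ExSeq C) (δ : S.Ext (X.obj (n + 1)) (X.obj 0)),
    S.Dist X δ ∧ X.obj 0 = A ∧ ∀ i, 1 ≤ i → i ≤ n + 1 → 𝒳.mem (X.obj i))

end ClusterTilting
section Angulated

variable {C : Type u} [Category.{v} C] [Preadditive C]

/-- An `(n+2)`-`Σ`-sequence `A₀ → A₁ → ⋯ → A_{n+1} → Σ A₀`. -/
structure SgSeq (C : Type u) [Category.{v} C] (Sg : C ⥤ C) (n : ℕ) :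
    Type max u v where
  obj : ℕ → C
  map : ∀ i, obj i ⟶ obj (i + 1)
  ext : obj (n + 1) ⟶ Sg.obj (obj 0)

/-- A morphism of `(n+2)`-`Σ`-sequences. -/
structure SgSeqHom {C : Type u} [Category.{v} C] {Sg : C ⥤ C} {n : ℕ}
    (X Y : SgSeq C Sg n) : Type max u v where
  hom : ∀ i, X.obj i ⟶ Y.obj i
  comm : ∀ i, i ≤ n → X.map i ≫ hom (i + 1) = hom i ≫ Y.map i
  comm_ext : X.ext ≫ Sg.map (hom 0) = hom (n + 1) ≫ Y.ext

variable {Sg : C ⥤ C} {n : ℕ}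

/-- `T` is (equal to) the trivial sequence `0 → A = A → 0 → ⋯ → 0`. -/
def IsTrivialSgSeq (A : C) (T : SgSeq C Sg n) : Prop :=
  IsZero (T.obj 0) ∧
  (∃ (h1 : T.obj 1 = A) (h2 : T.obj 2 = A), T.map 1 = eqToHom (h1.trans h2.symm)) ∧
  (∀ i, 3 ≤ i → i ≤ n + 1 → IsZero (T.obj i))

variable [HasBinaryBiproducts C]

/-- `U` is the direct sum of the sequences `X` and `Y`. -/
def IsBiprodSgSeq (X Y U : SgSeq C Sg n) : Prop :=
  ∃ e : ∀ i, i ≤ n + 1 → U.obj i = (X.obj i ⊞ Y.obj i),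
    (∀ i (h : i + 1 ≤ n + 1), U.map i = eqToHom (e i (by omega)) ≫
      biprod.map (X.map i) (Y.map i) ≫ eqToHom (e (i + 1) h).symm) ∧
    U.ext = eqToHom (e (n + 1) le_rfl) ≫
      biprod.desc (X.ext ≫ Sg.map biprod.inl) (Y.ext ≫ Sg.map biprod.inr) ≫
        eqToHom (congrArg Sg.obj (e 0 (by omega)).symm)

/-- `T` is the left rotation of `X`. -/
def IsRotation (X T : SgSeq C Sg n) : Prop :=
  ∃ (e : ∀ i, i ≤ n → T.obj i = X.obj (i + 1)) (el : T.obj (n + 1) = Sg.obj (X.obj 0)),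
    (∀ i (h : i + 1 ≤ n), T.map i = eqToHom (e i (by omega)) ≫ X.map (i + 1) ≫
      eqToHom (e (i + 1) h).symm) ∧
    (T.map n = eqToHom (e n le_rfl) ≫ X.ext ≫ eqToHom el.symm) ∧
    (T.ext = eqToHom el ≫ (((-1 : ℤ) ^ n) • Sg.map (X.map 0)) ≫
      eqToHom (congrArg Sg.obj (e 0 (by omega)).symm))

/-- The axioms (RN1), (RN2), (RN3) of a right `(n+2)`-angulated category. -/
structure RightAngulatedRN123 (Sg : C ⥤ C) (n : ℕ) (Θ : Set (SgSeq C Sg n)) : Prop where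
  /-- (RN1)(a): `Θ` is closed under isomorphisms. -/
  iso_closed : ∀ (X Y : SgSeq C Sg n) (f : SgSeqHom X Y),
    (∀ i, i ≤ n + 1 → IsIso (f.hom i)) → X ∈ Θ → Y ∈ Θ
  /-- (RN1)(a): `Θ` is closed under direct sums. -/
  sum_closed : ∀ X Y U : SgSeq C Sg n, X ∈ Θ → Y ∈ Θ → IsBiprodSgSeq X Y U → U ∈ Θ
  /-- (RN1)(b): the trivial sequences belong to `Θ`. -/
  trivial_mem : ∀ A : C, ∃ T ∈ Θ, IsTrivialSgSeq A T
  /-- (RN1)(c): every morphism extends to a right `(n+2)`-angle. -/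
  extend : ∀ {A B : C} (f : A ⟶ B), ∃ T ∈ Θ, ∃ (h0 : T.obj 0 = A) (h1 : T.obj 1 = B),
    T.map 0 = eqToHom h0 ≫ f ≫ eqToHom h1.symm
  /-- (RN2): `Θ` is closed under left rotation. -/
  rot : ∀ X ∈ Θ, ∀ T, IsRotation X T → T ∈ Θ
  /-- (RN3): commutative squares extend to morphisms of right `(n+2)`-angles. -/
  rn3 : ∀ X Y : SgSeq C Sg n, X ∈ Θ → Y ∈ Θ →
    ∀ (a : X.obj 0 ⟶ Y.obj 0) (b : X.obj 1 ⟶ Y.obj 1), X.map 0 ≫ b = a ≫ Y.map 0 →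
      ∃ f : SgSeqHom X Y, f.hom 0 = a ∧ f.hom 1 = b

/-- A right `(n+2)`-angulated category: (RN1)–(RN3) together with the higher
octahedral axiom (RN4). -/
structure RightAngulated (Sg : C ⥤ C) (n : ℕ) (Θ : Set (SgSeq C Sg n)) extends
    RightAngulatedRN123 Sg n Θ : Prop where
  /-- (RN4): the higher octahedral axiom. -/
  rn4 : ∀ X Y U : SgSeq C Sg n, X ∈ Θ → Y ∈ Θ → U ∈ Θ →
    ∀ (h0 : Y.obj 0 = X.obj 0) (hU0 : U.obj 0 = X.obj 1) (hU1 : U.obj 1 = Y.obj 1),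
    Y.map 0 = eqToHom h0 ≫ X.map 0 ≫ (eqToHom hU0.symm ≫ U.map 0 ≫ eqToHom hU1) →
    ∃ (φ : ∀ i, X.obj i ⟶ Y.obj i) (ψ : ∀ i, Y.obj i ⟶ U.obj i)
      (φ' : ∀ i, X.obj (i + 1) ⟶ U.obj i),
      φ 0 = eqToHom h0.symm ∧
      φ 1 = eqToHom hU0.symm ≫ U.map 0 ≫ eqToHom hU1 ∧
      (∀ i, i ≤ n → X.map i ≫ φ (i + 1) = φ i ≫ Y.map i) ∧
      (φ (n + 1) ≫ Y.ext ≫ eqToHom (congrArg Sg.obj h0) = X.ext) ∧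
      (ψ (n + 1) ≫ U.ext ≫ eqToHom (congrArg Sg.obj hU0) =
        Y.ext ≫ eqToHom (congrArg Sg.obj h0) ≫ Sg.map (X.map 0)) ∧
      ∃ V ∈ Θ, ∃ (hV0 : V.obj 0 = X.obj 2)
        (hV1 : 2 ≤ n → V.obj 1 = (X.obj 3 ⊞ Y.obj 2))
        (hVmid : ∀ i, 2 ≤ i → i + 1 ≤ n → V.obj i = ((X.obj (i + 2) ⊞ Y.obj (i + 1)) ⊞ U.obj i))
        (hVn : ∀ j, j = n → 2 ≤ n → V.obj j = (Y.obj (j + 1) ⊞ U.obj j))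
        (hVl : V.obj (n + 1) = U.obj (n + 1)),
        (∀ h : 2 ≤ n, V.map 0 =
          eqToHom hV0 ≫ biprod.lift (X.map 2) (φ 2) ≫ eqToHom (hV1 h).symm) ∧
        (∀ h : 3 ≤ n, V.map 1 = eqToHom (hV1 (by omega)) ≫
          biprod.desc (biprod.lift (biprod.lift (-(X.map 3)) (φ 3)) (φ' 2))
            (biprod.lift (biprod.lift 0 (-(Y.map 2))) (ψ 2)) ≫
          eqToHom (hVmid 2 le_rfl h).symm) ∧
        (∀ i (h2 : 2 ≤ i) (hn : i + 2 ≤ n), V.map i =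
          eqToHom (hVmid i (by omega) (by omega)) ≫
          biprod.desc
            (biprod.desc
              (biprod.lift (biprod.lift (-(X.map (i + 2))) (((-1 : ℤ) ^ (i + 1)) • φ (i + 2))) (φ' (i + 1)))
              (biprod.lift (biprod.lift 0 (-(Y.map (i + 1)))) (ψ (i + 1))))
            (biprod.lift (biprod.lift 0 0) (U.map i)) ≫
          eqToHom (hVmid (i + 1) (by omega) (by omega)).symm) ∧
        (∀ h : n = 2, V.map 1 = eqToHom (hV1 (by omega)) ≫
          biprod.desc (biprod.lift (φ 3) (φ' 2)) (biprod.lift (-(Y.map 2)) (ψ 2)) ≫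
          eqToHom (hVn 2 h.symm (by omega)).symm) ∧
        (∀ i (h2 : 2 ≤ i) (hn : i + 1 = n), V.map i =
          eqToHom (hVmid i (by omega) (by omega)) ≫
          biprod.desc
            (biprod.desc
              (biprod.lift (((-1 : ℤ) ^ (i + 1)) • φ (i + 2)) (φ' (i + 1)))
              (biprod.lift (-(Y.map (i + 1))) (ψ (i + 1))))
            (biprod.lift 0 (U.map i)) ≫
          eqToHom (hVn (i + 1) (by omega) (by omega)).symm) ∧
        (∀ j (hj : j = n) (hn : 2 ≤ n), V.map j =
          eqToHom (hVn j hj hn) ≫ biprod.desc (ψ (j + 1)) (U.map j) ≫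
          eqToHom (show U.obj (j + 1) = V.obj (j + 1) from by rw [hj]; exact hVl.symm)) ∧
        (V.ext = eqToHom hVl ≫ U.ext ≫ eqToHom (congrArg Sg.obj hU0) ≫
          Sg.map (X.map 1) ≫ eqToHom (congrArg Sg.obj hV0).symm) ∧
        (∀ h : n = 1, ∃ e1 : V.obj 1 = Y.obj 2,
          V.map 0 = eqToHom hV0 ≫ φ 2 ≫ eqToHom e1.symm ∧
          V.map 1 = eqToHom e1 ≫ ψ 2 ≫
            eqToHom (show U.obj 2 = V.obj 2 from by
              rw [show (2 : ℕ) = n + 1 from by omega]; exact hVl.symm))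

/-- An `(n+2)`-angulated category in the sense of Geiss–Keller–Oppermann:
in addition to being right `(n+2)`-angulated, the suspension is an equivalence,
and `Θ` is closed under direct summands and inverse rotation. -/
structure Angulated (Sg : C ⥤ C) (n : ℕ) (Θ : Set (SgSeq C Sg n)) extends
    RightAngulated Sg n Θ : Prop where
  sg_equiv : Sg.IsEquivalence
  sg_additive : Sg.Additive
  rot_rev : ∀ X T : SgSeq C Sg n, IsRotation X T → T ∈ Θ → X ∈ Θ
  summand_closed : ∀ X Y U : SgSeq C Sg n, IsBiprodSgSeq X Y U → U ∈ Θ → X ∈ Θ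

end Angulated

namespace RotAux

variable {C : Type u} [Category.{v} C] [Preadditive C] [HasZeroObject C]
  [HasBinaryBiproducts C] {Sg : C ⥤ C} {n : ℕ}

/-- Explicit left rotation of an `(n+2)`-`Σ`-sequence. -/
def rot (X : SgSeq C Sg n) : SgSeq C Sg n where
  obj i := if i ≤ n then X.obj (i + 1) else Sg.obj (X.obj 0)
  map i :=
    if h : i + 1 ≤ n then
      eqToHom (if_pos (by omega)) ≫ X.map (i + 1) ≫ eqToHom (if_pos h).symm
    else if h2 : i = n then
      eqToHom (if_pos (by omega)) ≫
        (eqToHom (congrArg X.obj (by omega)) ≫ X.ext) ≫ eqToHom (if_neg (by omega)).symm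
    else 0
  ext := eqToHom (if_neg (by omega)) ≫ (((-1 : ℤ) ^ n) • Sg.map (X.map 0)) ≫
    eqToHom (congrArg Sg.obj (if_pos (by omega)).symm)

lemma rot_obj_of_le (X : SgSeq C Sg n) {i : ℕ} (h : i ≤ n) :
    (rot X).obj i = X.obj (i + 1) := if_pos h

lemma rot_obj_last (X : SgSeq C Sg n) :
    (rot X).obj (n + 1) = Sg.obj (X.obj 0) := if_neg (by omega)

lemma rot_map_of_lt (X : SgSeq C Sg n) {i : ℕ} (h : i + 1 ≤ n) :
    (rot X).map i =
      eqToHom (rot_obj_of_le X (by omega)) ≫ X.map (i + 1) ≫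
        eqToHom (rot_obj_of_le X h).symm := by
  dsimp only [rot]
  rw [dif_pos h]

lemma rot_map_last (X : SgSeq C Sg n) (hn : 0 < n) :
    (rot X).map n =
      eqToHom (rot_obj_of_le X le_rfl) ≫ X.ext ≫ eqToHom (rot_obj_last X).symm := by
  dsimp only [rot]
  rw [dif_neg (by omega), dif_pos rfl]
  simp

lemma isRotation_rot (X : SgSeq C Sg n) : IsRotation X (rot X) := by
  refine ⟨fun i h => rot_obj_of_le X h, rot_obj_last X, ?_, ?_, ?_⟩
  · intro i h
    rw [rot_map_of_lt X h]
  · dsimp only [rot]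
    by_cases hn : n = 0
    · subst hn
      rw [dif_neg (by omega), dif_pos rfl]
      simp
      exact (Category.id_comp _).symm
    · rw [dif_neg (by omega), dif_pos rfl]
      simp
  · rfl

/-- The "ext" morphism of a trivial sequence vanishes. -/
lemma trivial_ext_zero (hn : 0 < n) (Θ : Set (SgSeq C Sg n))
    (hΘ : RightAngulatedRN123 Sg n Θ) (T : SgSeq C Sg n) (hT : T ∈ Θ)
    {A : C} (h : IsTrivialSgSeq A T) : T.ext = 0 := by
  obtain ⟨hz0, ⟨h1, h2, hmap1⟩, hz⟩ := h
  by_cases hbig : 2 ≤ n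
  · exact (hz (n + 1) (by omega) le_rfl).eq_of_src T.ext 0
  · -- n = 1
    have hn1 : n = 1 := by omega
    subst hn1
    obtain ⟨f, hf0, hf1⟩ := hΘ.rn3 T T hT hT (𝟙 (T.obj 0)) 0
      (by rw [hz0.eq_of_src (T.map 0) 0]; simp)
    have hc1 := f.comm 1 le_rfl
    rw [hf1, zero_comp, hmap1] at hc1
    have hf2 : f.hom 2 = 0 := by
      calc f.hom 2 = eqToHom (h1.trans h2.symm).symm ≫
            (eqToHom (h1.trans h2.symm) ≫ f.hom 2) := by simp
        _ = 0 := by rw [hc1]; simp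
    have hce := f.comm_ext
    rw [hf0, hf2, zero_comp] at hce
    simpa using hce

/-- Base case: the composite of the first two morphisms vanishes. -/
lemma map0_map1 (hn : 0 < n) (Θ : Set (SgSeq C Sg n))
    (hΘ : RightAngulatedRN123 Sg n Θ) (W : SgSeq C Sg n) (hW : W ∈ Θ) :
    W.map 0 ≫ W.map 1 = 0 := by
  obtain ⟨T, hT, hTtriv⟩ := hΘ.trivial_mem (W.obj 0)
  obtain ⟨hz0, ⟨h1, h2, hmap1⟩, hz⟩ := hTtriv
  have hT' : rot T ∈ Θ := hΘ.rot T hT (rot T) (isRotation_rot T)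
  have e0 : (rot T).obj 0 = W.obj 0 := (rot_obj_of_le T (by omega)).trans h1
  have e1 : (rot T).obj 1 = W.obj 0 := (rot_obj_of_le T hn).trans h2
  have hsq : (rot T).map 0 ≫ (eqToHom e1 ≫ W.map 0) = eqToHom e0 ≫ W.map 0 := by
    rw [rot_map_of_lt T hn, hmap1]
    simp
  obtain ⟨φ, hφ0, hφ1⟩ := hΘ.rn3 (rot T) W hT' hW (eqToHom e0) (eqToHom e1 ≫ W.map 0) hsq
  have hc1 := φ.comm 1 hn
  have hm1 : (rot T).map 1 = 0 := by
    by_cases hbig : 2 ≤ n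
    · rw [rot_map_of_lt T hbig]
      have : T.map 2 = 0 := (hz 3 le_rfl (by omega)).eq_of_tgt (T.map 2) 0
      rw [this]
      simp
    · have hn1 : n = 1 := by omega
      have hext : T.ext = 0 := trivial_ext_zero hn Θ hΘ T hT ⟨hz0, ⟨h1, h2, hmap1⟩, hz⟩
      subst hn1
      rw [rot_map_last T (by omega), hext]
      simp
  rw [hm1, zero_comp, hφ1] at hc1
  calc W.map 0 ≫ W.map 1
      = eqToHom e1.symm ≫ ((eqToHom e1 ≫ W.map 0) ≫ W.map 1) := by simp
    _ = 0 := by rw [← hc1]; simp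

lemma mapSucc_zero (hn : 0 < n) (Θ : Set (SgSeq C Sg n))
    (hΘ : RightAngulatedRN123 Sg n Θ) :
    ∀ (i : ℕ) (X : SgSeq C Sg n), X ∈ Θ → i + 1 ≤ n →
      X.map i ≫ X.map (i + 1) = 0 := by
  intro i
  induction i with
  | zero => exact fun X hX _ => map0_map1 hn Θ hΘ X hX
  | succ i ih =>
    intro X hX h
    have hrot : rot X ∈ Θ := hΘ.rot X hX (rot X) (isRotation_rot X)
    have h0 := ih (rot X) hrot (by omega)
    rw [rot_map_of_lt X (by omega : i + 1 ≤ n), rot_map_of_lt X h] at h0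
    calc X.map (i + 1) ≫ X.map (i + 2)
        = eqToHom (rot_obj_of_le X (by omega : i ≤ n)).symm ≫
            ((eqToHom (rot_obj_of_le X (by omega)) ≫ X.map (i + 1) ≫
              eqToHom (rot_obj_of_le X (by omega : i + 1 ≤ n)).symm) ≫
             (eqToHom (rot_obj_of_le X (by omega : i + 1 ≤ n)) ≫ X.map (i + 2) ≫
              eqToHom (rot_obj_of_le X h).symm)) ≫
            eqToHom (rot_obj_of_le X h) := by simp
      _ = 0 := by rw [h0]; simp

lemma map_ext_zero (hn : 0 < n) (Θ : Set (SgSeq C Sg n))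
    (hΘ : RightAngulatedRN123 Sg n Θ) (X : SgSeq C Sg n) (hX : X ∈ Θ) :
    X.map n ≫ X.ext = 0 := by
  obtain ⟨m, rfl⟩ : ∃ m, n = m + 1 := ⟨n - 1, by omega⟩
  have hrot : rot X ∈ Θ := hΘ.rot X hX (rot X) (isRotation_rot X)
  have h0 := mapSucc_zero hn Θ hΘ m (rot X) hrot (by omega)
  rw [rot_map_of_lt X (le_refl (m + 1)), rot_map_last X hn] at h0
  calc X.map (m + 1) ≫ X.ext
      = eqToHom (rot_obj_of_le X (by omega : m ≤ m + 1)).symm ≫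
          ((eqToHom (rot_obj_of_le X (by omega)) ≫ X.map (m + 1) ≫
            eqToHom (rot_obj_of_le X (le_refl (m + 1))).symm) ≫
           (eqToHom (rot_obj_of_le X (le_refl (m + 1))) ≫ X.ext ≫
            eqToHom (rot_obj_last X).symm)) ≫
          eqToHom (rot_obj_last X) := by simp
    _ = 0 := by rw [h0]; simp

end RotAux

/-- In a category with a class `Θ` of `(n+2)`-`Σ`-sequences
satisfying (RN1)–(RN3), any composition of two consecutive morphisms in a right
`(n+2)`-angle vanishes. -/
theorem rightAngle_comp_eq_zero
    {n : ℕ} (hn : 0 < n) {C : Type u} [Category.{v} C] [Preadditive C]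
    [HasZeroObject C] [HasBinaryBiproducts C]
    (Sg : C ⥤ C) (Θ : Set (SgSeq C Sg n)) (hΘ : RightAngulatedRN123 Sg n Θ)
    (X : SgSeq C Sg n) (hX : X ∈ Θ) :
    (∀ i, i + 1 ≤ n → X.map i ≫ X.map (i + 1) = 0) ∧ X.map n ≫ X.ext = 0 :=
  ⟨fun i h => RotAux.mapSucc_zero hn Θ hΘ i X hX h,
   RotAux.map_ext_zero hn Θ hΘ X hX⟩
end

section
/- Let A be an additive category with an additive endofunctor Σ and a class Θ of (n+2)-Σ-sequences satisfying axioms (RN1), (RN2) and (RN3). For every right (n+2)-angle A_0 --f_0--> A_1 --f_1--> A_2 → ⋯ --f_{n-1}--> A_n --f_n--> A_{n+1} --f_{n+1}--> ΣA_0 in Θ, the morphism f_i is a weak cokernel of f_{i−1} for all i = 1, 2, …, n+1. -/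
open CategoryTheory CategoryTheory.Limits Opposite ZeroObject

universe v u

section WeakCokProof

set_option linter.unusedSectionVars false

variable {C : Type u} [Category.{v} C] [Preadditive C] [HasZeroObject C]
  [HasBinaryBiproducts C] {Sg : C ⥤ C} {n : ℕ}

/-- The object part of the left rotation of an `(n+2)`-`Σ`-sequence. -/
def rotObj (X : SgSeq C Sg n) (i : ℕ) : C :=
  if i ≤ n then X.obj (i + 1) else Sg.obj (X.obj 0)

lemma rotObj_le (X : SgSeq C Sg n) {i : ℕ} (h : i ≤ n) : rotObj X i = X.obj (i + 1) :=
  if_pos h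

lemma rotObj_gt (X : SgSeq C Sg n) {i : ℕ} (h : n < i) :
    rotObj X i = Sg.obj (X.obj 0) := if_neg (by omega)

/-- The left rotation of an `(n+2)`-`Σ`-sequence. -/
def rotSeq (X : SgSeq C Sg n) : SgSeq C Sg n where
  obj := rotObj X
  map i :=
    if h : i < n then
      eqToHom (rotObj_le X (by omega)) ≫ X.map (i + 1) ≫
        eqToHom (rotObj_le X (by omega : i + 1 ≤ n)).symm
    else if h2 : i = n then
      eqToHom ((rotObj_le X (by omega)).trans (by rw [h2])) ≫ X.ext ≫
        eqToHom (rotObj_gt X (by omega)).symm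
    else
      eqToHom ((rotObj_gt X (by omega)).trans (rotObj_gt X (by omega : n < i + 1)).symm)
  ext := eqToHom (rotObj_gt X (by omega)) ≫ (((-1 : ℤ) ^ n) • Sg.map (X.map 0)) ≫
    eqToHom (congrArg Sg.obj (rotObj_le X (by omega : 0 ≤ n)).symm)

lemma rotSeq_map_lt (X : SgSeq C Sg n) {i : ℕ} (h : i < n) :
    (rotSeq X).map i =
      eqToHom (rotObj_le X (by omega : i ≤ n)) ≫ X.map (i + 1) ≫
        eqToHom (rotObj_le X (by omega : i + 1 ≤ n)).symm := by
  exact dif_pos h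

lemma rotSeq_map_n (X : SgSeq C Sg n) :
    (rotSeq X).map n =
      eqToHom (rotObj_le X (le_refl n)) ≫ X.ext ≫
        eqToHom (rotObj_gt X (by omega : n < n + 1)).symm := by
  exact (dif_neg (lt_irrefl n)).trans (dif_pos rfl)

lemma rotSeq_ext (X : SgSeq C Sg n) :
    (rotSeq X).ext = eqToHom (rotObj_gt X (by omega : n < n + 1)) ≫
      (((-1 : ℤ) ^ n) • Sg.map (X.map 0)) ≫
        eqToHom (congrArg Sg.obj (rotObj_le X (by omega : 0 ≤ n)).symm) := rfl

lemma isRotation_rotSeq (X : SgSeq C Sg n) : IsRotation X (rotSeq X) := by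
  refine ⟨fun i hi => rotObj_le X hi, rotObj_gt X (by omega), fun i h => ?_, ?_, ?_⟩
  · exact rotSeq_map_lt X (by omega)
  · exact rotSeq_map_n X
  · rfl

/-- Iterated left rotation. -/
def rotIter (X : SgSeq C Sg n) : ℕ → SgSeq C Sg n
  | 0 => X
  | i + 1 => rotSeq (rotIter X i)

lemma rotIter_succ (X : SgSeq C Sg n) (i : ℕ) :
    rotIter X (i + 1) = rotSeq (rotIter X i) := rfl

lemma rotIter_mem {Θ : Set (SgSeq C Sg n)} (hΘ : RightAngulatedRN123 Sg n Θ)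
    {X : SgSeq C Sg n} (hX : X ∈ Θ) : ∀ i, rotIter X i ∈ Θ := by
  intro i
  induction i with
  | zero => exact hX
  | succ i ih => exact hΘ.rot _ ih _ (isRotation_rotSeq _)

lemma rotIter_obj (X : SgSeq C Sg n) :
    ∀ (i j k : ℕ), i + j = k → i + j ≤ n + 1 → (rotIter X i).obj j = X.obj k := by
  intro i
  induction i with
  | zero =>
      intro j k hk _
      obtain rfl : j = k := by omega
      rfl
  | succ i ih =>
      intro j k hk h
      have h1 : (rotIter X (i + 1)).obj j = (rotIter X i).obj (j + 1) :=
        rotObj_le (rotIter X i) (by omega)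
      rw [h1]
      exact ih (j + 1) k (by omega) (by omega)

lemma rotIter_obj_sg (X : SgSeq C Sg n) :
    ∀ (i j : ℕ), 1 ≤ i → i + j = n + 2 → i ≤ n + 1 →
      (rotIter X i).obj j = Sg.obj (X.obj 0) := by
  intro i
  induction i with
  | zero => intro j h1 _ _; omega
  | succ i ih =>
      intro j h1 hk hi
      by_cases h0 : i = 0
      · subst h0
        obtain rfl : j = n + 1 := by omega
        exact rotObj_gt X (by omega)
      · have he : (rotIter X (i + 1)).obj j = (rotIter X i).obj (j + 1) :=
          rotObj_le (rotIter X i) (by omega)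
        rw [he]
        exact ih (j + 1) (by omega) (by omega) (by omega)

lemma rotIter_map (X : SgSeq C Sg n) :
    ∀ (i j k : ℕ) (hk : i + j = k) (h : i + j ≤ n),
      (rotIter X i).map j =
        eqToHom (rotIter_obj X i j k hk (by omega)) ≫ X.map k ≫
          eqToHom (rotIter_obj X i (j + 1) (k + 1) (by omega) (by omega)).symm := by
  intro i
  induction i with
  | zero =>
      intro j k hk h
      obtain rfl : j = k := by omega
      simp [rotIter]
      exact (Category.id_comp _).symm
  | succ i ih =>
      intro j k hk h
      have hstep : (rotIter X (i + 1)).map j =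
          eqToHom (rotObj_le (rotIter X i) (by omega : j ≤ n)) ≫ (rotIter X i).map (j + 1) ≫
            eqToHom (rotObj_le (rotIter X i) (by omega : j + 1 ≤ n)).symm :=
        rotSeq_map_lt (rotIter X i) (by omega)
      rw [hstep, ih (j + 1) k (by omega) (by omega)]
      simp [eqToHom_trans]
      rfl

lemma rotIter_map_ext (X : SgSeq C Sg n) :
    ∀ (i j : ℕ) (h1 : 1 ≤ i) (hk : i + j = n + 1),
      (rotIter X i).map j =
        eqToHom (rotIter_obj X i j (n + 1) hk (by omega)) ≫ X.ext ≫
          eqToHom (rotIter_obj_sg X i (j + 1) h1 (by omega) (by omega)).symm := by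
  intro i
  induction i with
  | zero => intro j h1 hk; omega
  | succ i ih =>
      intro j h1 hk
      by_cases h0 : i = 0
      · subst h0
        obtain rfl : j = n := by omega
        exact rotSeq_map_n (rotIter X 0)
      · have hstep : (rotIter X (i + 1)).map j =
            eqToHom (rotObj_le (rotIter X i) (by omega : j ≤ n)) ≫ (rotIter X i).map (j + 1) ≫
              eqToHom (rotObj_le (rotIter X i) (by omega : j + 1 ≤ n)).symm :=
          rotSeq_map_lt (rotIter X i) (by omega)
        rw [hstep, ih (j + 1) (by omega) (by omega)]
        simp [eqToHom_trans]
        rfl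

lemma sgZero_aux {Θ : Set (SgSeq C Sg 1)} (hΘ : RightAngulatedRN123 Sg 1 Θ)
    (T : SgSeq C Sg 1) (hT : T ∈ Θ) (hz : IsZero (T.obj 0)) :
    IsZero (Sg.obj (T.obj 0)) := by
  have hR : rotSeq T ∈ Θ := hΘ.rot T hT _ (isRotation_rotSeq T)
  obtain ⟨φ, hφ0, hφ1⟩ := hΘ.rn3 (rotSeq T) T hR hT 0 0 (by simp)
  have hq1 : (rotSeq T).obj 1 = T.obj 2 := rotObj_le T (le_refl 1)
  have hq : (rotSeq T).obj (1 + 1) = Sg.obj (T.obj 0) := rotObj_gt T (i := 1 + 1) (by omega)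
  have he0 : (rotSeq T).obj 0 = T.obj 1 := rotObj_le T (i := 0) (by omega)
  have hmap1 : (rotSeq T).map 1 = eqToHom hq1 ≫ T.ext ≫ eqToHom hq.symm := by
    rw [rotSeq_map_n T]
    rfl
  have hc1 : (rotSeq T).map 1 ≫ φ.hom (1 + 1) = 0 := by
    have hc := φ.comm 1 le_rfl
    rw [hφ1, zero_comp] at hc
    exact hc
  have hv1 : T.ext ≫ eqToHom hq.symm ≫ φ.hom (1 + 1) = 0 := by
    rw [hmap1, Category.assoc, Category.assoc] at hc1
    calc T.ext ≫ eqToHom hq.symm ≫ φ.hom (1 + 1)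
        = eqToHom hq1.symm ≫ eqToHom hq1 ≫ T.ext ≫ eqToHom hq.symm ≫ φ.hom (1 + 1) := by
          simp
      _ = 0 := by rw [hc1, comp_zero]
  have hce := φ.comm_ext
  have hext : (rotSeq T).ext = eqToHom hq ≫ (((-1 : ℤ) ^ 1) • Sg.map (T.map 0)) ≫
      eqToHom (congrArg Sg.obj he0.symm) := rotSeq_ext T
  have hL : (rotSeq T).ext ≫ Sg.map (φ.hom 0) = -eqToHom hq := by
    rw [hext]
    have h1 : T.map 0 ≫ eqToHom he0.symm ≫ φ.hom 0 = 𝟙 (T.obj 0) := hz.eq_of_src _ _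
    calc (eqToHom hq ≫ (((-1 : ℤ) ^ 1) • Sg.map (T.map 0)) ≫
          eqToHom (congrArg Sg.obj he0.symm)) ≫ Sg.map (φ.hom 0)
        = eqToHom hq ≫ (-(Sg.map (T.map 0) ≫ Sg.map (eqToHom he0.symm) ≫ Sg.map (φ.hom 0))) := by
          simp [eqToHom_map]
      _ = eqToHom hq ≫ (-(Sg.map (T.map 0 ≫ eqToHom he0.symm ≫ φ.hom 0))) := by
          rw [← Sg.map_comp, ← Sg.map_comp]
      _ = -eqToHom hq := by rw [h1, Sg.map_id]; simp
  have hkey : φ.hom (1 + 1) ≫ T.ext = -eqToHom hq := by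
    rw [← hce]; exact hL
  rw [IsZero.iff_id_eq_zero]
  have hw2 : (eqToHom hq.symm ≫ φ.hom (1 + 1)) ≫ T.ext = -𝟙 (Sg.obj (T.obj 0)) := by
    rw [Category.assoc, hkey]
    simp
  calc 𝟙 (Sg.obj (T.obj 0))
      = ((eqToHom hq.symm ≫ φ.hom (1 + 1)) ≫ T.ext) ≫
          ((eqToHom hq.symm ≫ φ.hom (1 + 1)) ≫ T.ext) := by rw [hw2]; simp
    _ = (eqToHom hq.symm ≫ φ.hom (1 + 1)) ≫
          (T.ext ≫ eqToHom hq.symm ≫ φ.hom (1 + 1)) ≫ T.ext := by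
        simp only [Category.assoc]
    _ = 0 := by rw [hv1]; simp

lemma claimA {Θ : Set (SgSeq C Sg n)} (hΘ : RightAngulatedRN123 Sg n Θ) (hn : 0 < n)
    (Y : SgSeq C Sg n) (hY : Y ∈ Θ) : Y.map 0 ≫ Y.map 1 = 0 := by
  obtain ⟨T, hT, hz0, ⟨h1, h2, hm⟩, hz3⟩ := hΘ.trivial_mem (Y.obj 0)
  have hR : rotSeq T ∈ Θ := hΘ.rot T hT _ (isRotation_rotSeq T)
  have e0 : (rotSeq T).obj 0 = T.obj 1 := rotObj_le T (i := 0) (by omega)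
  have e1 : (rotSeq T).obj 1 = T.obj 2 := rotObj_le T hn
  have hzero2 : IsZero ((rotSeq T).obj 2) := by
    rcases Nat.lt_or_ge n 2 with h | h
    · have hn1 : n = 1 := by omega
      subst hn1
      have hh : (rotSeq T).obj 2 = Sg.obj (T.obj 0) := rotObj_gt T (i := 2) (by omega)
      rw [hh]
      exact sgZero_aux hΘ T hT hz0
    · have hh : (rotSeq T).obj 2 = T.obj 3 := rotObj_le T (i := 2) (by omega)
      rw [hh]
      exact hz3 3 (by omega) (by omega)
  have hmap0 : (rotSeq T).map 0 = eqToHom e0 ≫ T.map 1 ≫ eqToHom e1.symm := by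
    rw [rotSeq_map_lt T hn]
    rfl
  obtain ⟨φ, hφ0, hφ1⟩ := hΘ.rn3 (rotSeq T) Y hR hY
      (eqToHom (e0.trans h1)) (eqToHom (e1.trans h2) ≫ Y.map 0)
      (by rw [hmap0, hm]; simp [eqToHom_trans])
  have hmap1 : (rotSeq T).map 1 = 0 := hzero2.eq_of_tgt _ _
  have hc := φ.comm 1 hn
  rw [hmap1, zero_comp, hφ1] at hc
  calc Y.map 0 ≫ Y.map 1
      = eqToHom (e1.trans h2).symm ≫ ((eqToHom (e1.trans h2) ≫ Y.map 0) ≫ Y.map 1) := by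
        simp
    _ = 0 := by rw [← hc, comp_zero]

lemma claimB {Θ : Set (SgSeq C Sg n)} (hΘ : RightAngulatedRN123 Sg n Θ) (hn : 0 < n)
    (Y : SgSeq C Sg n) (hY : Y ∈ Θ) {Z : C} (h : Y.obj 1 ⟶ Z)
    (hh : Y.map 0 ≫ h = 0) : ∃ p : Y.obj 2 ⟶ Z, Y.map 1 ≫ p = h := by
  obtain ⟨T, hT, hz0, ⟨h1, h2, hm⟩, hz3⟩ := hΘ.trivial_mem Z
  obtain ⟨φ, hφ0, hφ1⟩ := hΘ.rn3 Y T hY hT 0 (h ≫ eqToHom h1.symm)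
      (by rw [← Category.assoc, hh, zero_comp, zero_comp])
  refine ⟨φ.hom 2 ≫ eqToHom h2, ?_⟩
  have hc := φ.comm 1 hn
  rw [hφ1, hm] at hc
  rw [← Category.assoc, hc]
  simp [eqToHom_trans]

lemma isWeakCokernel_conj {A B D A' B' D' : C} (eA : A' = A) (eB : B = B') (eB2 : B' = B)
    (eD : D = D') (f : A ⟶ B) (g : B ⟶ D) (h : IsWeakCokernel f g) :
    IsWeakCokernel (eqToHom eA ≫ f ≫ eqToHom eB) (eqToHom eB2 ≫ g ≫ eqToHom eD) := by
  subst eA; subst eB; subst eD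
  simpa [IsWeakCokernel] using h

end WeakCokProof

/-- In a category with a class `Θ` of `(n+2)`-`Σ`-sequences
satisfying (RN1)–(RN3), each morphism of a right `(n+2)`-angle is a weak
cokernel of the preceding one. -/
theorem rightAngle_isWeakCokernel
    {n : ℕ} (hn : 0 < n) {C : Type u} [Category.{v} C] [Preadditive C]
    [HasZeroObject C] [HasBinaryBiproducts C]
    (Sg : C ⥤ C) (Θ : Set (SgSeq C Sg n)) (hΘ : RightAngulatedRN123 Sg n Θ)
    (X : SgSeq C Sg n) (hX : X ∈ Θ) :
    (∀ i, i + 1 ≤ n → IsWeakCokernel (X.map i) (X.map (i + 1))) ∧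
      IsWeakCokernel (X.map n) X.ext := by
  constructor
  · intro i hi
    have hmem : rotIter X i ∈ Θ := rotIter_mem hΘ hX i
    have base : IsWeakCokernel ((rotIter X i).map 0) ((rotIter X i).map 1) :=
      ⟨claimA hΘ hn _ hmem, fun Z h hh => claimB hΘ hn _ hmem h hh⟩
    have e0 : (rotIter X i).obj 0 = X.obj i := rotIter_obj X i 0 i (by omega) (by omega)
    have e1 : (rotIter X i).obj 1 = X.obj (i + 1) :=
      rotIter_obj X i 1 (i + 1) (by omega) (by omega)
    have e2 : (rotIter X i).obj 2 = X.obj (i + 2) :=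
      rotIter_obj X i 2 (i + 2) (by omega) (by omega)
    have hm0 : eqToHom e0.symm ≫ (rotIter X i).map 0 ≫ eqToHom e1 = X.map i := by
      rw [rotIter_map X i 0 i (by omega) (by omega)]
      simp [eqToHom_trans]
    have hm1 : eqToHom e1.symm ≫ (rotIter X i).map 1 ≫ eqToHom e2 = X.map (i + 1) := by
      rw [rotIter_map X i 1 (i + 1) (by omega) (by omega)]
      simp [eqToHom_trans]
    rw [← hm0, ← hm1]
    exact isWeakCokernel_conj e0.symm e1 e1.symm e2 _ _ base
  · have hmem : rotIter X n ∈ Θ := rotIter_mem hΘ hX n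
    have base : IsWeakCokernel ((rotIter X n).map 0) ((rotIter X n).map 1) :=
      ⟨claimA hΘ hn _ hmem, fun Z h hh => claimB hΘ hn _ hmem h hh⟩
    have e0 : (rotIter X n).obj 0 = X.obj n := rotIter_obj X n 0 n (by omega) (by omega)
    have e1 : (rotIter X n).obj 1 = X.obj (n + 1) :=
      rotIter_obj X n 1 (n + 1) (by omega) (by omega)
    have e2 : (rotIter X n).obj 2 = Sg.obj (X.obj 0) :=
      rotIter_obj_sg X n 2 (by omega) (by omega) (by omega)
    have hm0 : eqToHom e0.symm ≫ (rotIter X n).map 0 ≫ eqToHom e1 = X.map n := by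
      rw [rotIter_map X n 0 n (by omega) (by omega)]
      simp [eqToHom_trans]
    have hm1 : eqToHom e1.symm ≫ (rotIter X n).map 1 ≫ eqToHom e2 = X.ext := by
      rw [rotIter_map_ext X n 1 (by omega) (by omega)]
      simp [eqToHom_trans]
    rw [← hm0, ← hm1]
    exact isWeakCokernel_conj e0.symm e1 e1.symm e2 _ _ base
end

section
/- Let (C,E,s) be an n-exangulated category and A_0 --α_0--> A_1 --α_1--> A_2 → ⋯ --α_{n-1}--> A_n --α_n--> A_{n+1} ⇢δ a distinguished n-exangle. Then for every object Y of C the following sequences of abelian groups are exact: C(Y,A_0) → C(Y,A_1) → ⋯ → C(Y,A_{n+1}) → E(Y,A_0) → E(Y,A_1) → E(Y,A_2), where the maps C(Y,A_i) → C(Y,A_{i+1}) are composition with α_i, the map C(Y,A_{n+1}) → E(Y,A_0) sends f to f^*δ, and the maps E(Y,A_i) → E(Y,A_{i+1}) are (α_i)_*; and dually C(A_{n+1},Y) → C(A_n,Y) → ⋯ → C(A_0,Y) → E(A_{n+1},Y) → E(A_n,Y) → E(A_{n-1},Y), where C(A_0,Y) → E(A_{n+1},Y) sends g to g_*δ. In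 particular, for each consecutive pair of differentials, α_{i+1} is a weak cokernel of α_i and α_i is a weak kernel of α_{i+1}. -/
open CategoryTheory CategoryTheory.Limits Opposite ZeroObject

universe v u

section LongExactInfra
set_option linter.unusedSectionVars false

variable {n : ℕ} {C : Type u} [Category.{v} C] [Preadditive C]
  [HasBinaryBiproducts C] {S : ExData n C}

namespace ExData

lemma push_push {Cc A A' A'' : C} (a : A ⟶ A') (b : A' ⟶ A'') (δ : S.Ext Cc A) :
    S.push b (S.push a δ) = S.push (a ≫ b) δ := by
  show _ = ((S.E.obj (op Cc)).map (a ≫ b)) δ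
  rw [Functor.map_comp]; rfl

lemma pull_pull {D' D Cc A : C} (c : D ⟶ Cc) (c' : D' ⟶ D) (δ : S.Ext Cc A) :
    S.pull c' (S.pull c δ) = S.pull (c' ≫ c) δ := by
  show _ = ((S.E.map (c' ≫ c).op).app A) δ
  rw [op_comp, Functor.map_comp]; rfl

lemma pull_push {Cc' Cc A A' : C} (c : Cc' ⟶ Cc) (a : A ⟶ A') (δ : S.Ext Cc A) :
    S.pull c (S.push a δ) = S.push a (S.pull c δ) := by
  exact ConcreteCategory.congr_hom ((S.E.map c.op).naturality a) δ

lemma push_id {Cc A : C} (δ : S.Ext Cc A) : S.push (𝟙 A) δ = δ := by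
  show ((S.E.obj (op Cc)).map (𝟙 A)) δ = δ
  rw [CategoryTheory.Functor.map_id]; rfl

lemma pull_id {Cc A : C} (δ : S.Ext Cc A) : S.pull (𝟙 Cc) δ = δ := by
  show ((S.E.map (𝟙 Cc).op).app A) δ = δ
  rw [op_id, CategoryTheory.Functor.map_id]; rfl

lemma push_zero {Cc A A' : C} (a : A ⟶ A') : S.push a (0 : S.Ext Cc A) = 0 :=
  map_zero _

lemma pull_zero {Cc' Cc A : C} (c : Cc' ⟶ Cc) : S.pull c (0 : S.Ext Cc A) = 0 :=
  map_zero _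

lemma push_add {Cc A A' : C} (a : A ⟶ A') (δ δ' : S.Ext Cc A) :
    S.push a (δ + δ') = S.push a δ + S.push a δ' := map_add _ _ _

lemma pull_add {Cc' Cc A : C} (c : Cc' ⟶ Cc) (δ δ' : S.Ext Cc A) :
    S.pull c (δ + δ') = S.pull c δ + S.pull c δ' := map_add _ _ _

variable (hS : IsExangulated S)
include hS

lemma push_zero_mor {Cc A A' : C} (δ : S.Ext Cc A) :
    S.push (0 : A ⟶ A') δ = 0 := by
  letI := hS.additive_right (op Cc)
  show ((S.E.obj (op Cc)).map (0 : A ⟶ A')) δ = 0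
  rw [Functor.map_zero]; rfl

lemma push_add_mor {Cc A A' : C} (a a' : A ⟶ A') (δ : S.Ext Cc A) :
    S.push (a + a') δ = S.push a δ + S.push a' δ := by
  letI := hS.additive_right (op Cc)
  show ((S.E.obj (op Cc)).map (a + a')) δ = _
  rw [Functor.map_add]; rfl

lemma push_neg_mor {Cc A A' : C} (a : A ⟶ A') (δ : S.Ext Cc A) :
    S.push (-a) δ = -S.push a δ := by
  letI := hS.additive_right (op Cc)
  show ((S.E.obj (op Cc)).map (-a)) δ = _
  rw [Functor.map_neg]; rfl

lemma pull_zero_mor {Cc' Cc A : C} (δ : S.Ext Cc A) :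
    S.pull (0 : Cc' ⟶ Cc) δ = 0 := by
  letI := hS.additive_left
  show ((S.E.map (0 : Cc' ⟶ Cc).op).app A) δ = 0
  rw [op_zero, Functor.map_zero]; rfl

lemma pull_add_mor {Cc' Cc A : C} (c c' : Cc' ⟶ Cc) (δ : S.Ext Cc A) :
    S.pull (c + c') δ = S.pull c δ + S.pull c' δ := by
  letI := hS.additive_left
  show ((S.E.map (c + c').op).app A) δ = _
  rw [op_add, Functor.map_add]; rfl

lemma pull_neg_mor {Cc' Cc A : C} (c : Cc' ⟶ Cc) (δ : S.Ext Cc A) :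
    S.pull (-c) δ = -S.pull c δ := by
  letI := hS.additive_left
  show ((S.E.map (-c).op).app A) δ = _
  rw [op_neg, Functor.map_neg]; rfl

omit hS

/-- pushing along the last differential kills the extension -/
lemma pull_dlast (hS : IsExangulated S) {X : ExSeq C}
    {δ : S.Ext (X.obj (n + 1)) (X.obj 0)} (hX : S.Dist X δ) :
    S.pull (X.map n) δ = 0 :=
  (hS.ex_cov_last X δ hX _ (X.map n)).mpr ⟨𝟙 _, Category.id_comp _⟩

lemma push_dzero (hS : IsExangulated S) {X : ExSeq C}
    {δ : S.Ext (X.obj (n + 1)) (X.obj 0)} (hX : S.Dist X δ) :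
    S.push (X.map 0) δ = 0 :=
  (hS.ex_con_last X δ hX _ (X.map 0)).mpr ⟨𝟙 _, Category.comp_id _⟩

lemma d_comp_d (hS : IsExangulated S) {X : ExSeq C}
    {δ : S.Ext (X.obj (n + 1)) (X.obj 0)} (hX : S.Dist X δ)
    (i : ℕ) (hi : i + 1 ≤ n) : X.map i ≫ X.map (i + 1) = 0 :=
  (hS.ex_cov_mid X δ hX i hi _ (X.map i)).mpr ⟨𝟙 _, Category.id_comp _⟩


/-- Key lemma: exactness at `E(Z, X₀)`. -/
lemma p1 (hS : IsExangulated S) (hn : 0 < n)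
    (X : ExSeq C) (δ : S.Ext (X.obj (n + 1)) (X.obj 0)) (hX : S.Dist X δ)
    (Z : C) (θ : S.Ext Z (X.obj 0)) (hθ : S.push (X.map 0) θ = 0) :
    ∃ f : Z ⟶ X.obj (n + 1), S.pull f δ = θ := by
  obtain ⟨m, rfl⟩ : ∃ m, n = m + 1 := ⟨n - 1, by omega⟩
  set φ : S.Ext (Z ⊞ X.obj (m + 1 + 1)) (X.obj 0) :=
    S.pull biprod.fst θ + S.pull biprod.snd δ with hφ
  obtain ⟨U, h0, h1, hU⟩ := hS.realize (X.obj 0) (Z ⊞ X.obj (m + 1 + 1)) φ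
  have hφinr : S.pull biprod.inr φ = δ := by
    rw [hφ, pull_add, pull_pull, pull_pull, biprod.inr_fst, biprod.inr_snd,
      pull_zero_mor hS, pull_id, zero_add]
  have hφinl : S.pull biprod.inl φ = θ := by
    rw [hφ, pull_add, pull_pull, pull_pull, biprod.inl_fst, biprod.inl_snd,
      pull_zero_mor hS, pull_id, add_zero]
  have hφd0 : S.push (X.map 0) φ = 0 := by
    rw [hφ, push_add, ← pull_push, ← pull_push, hθ, push_dzero hS hX,
      pull_zero, pull_zero, add_zero]
  set ρ := S.push (eqToHom h0.symm) (S.pull (eqToHom h1) φ) with hρ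
  have hA : X.obj 0 = U.obj 0 := h0.symm
  set c : X.obj (m + 1 + 1) ⟶ U.obj (m + 1 + 1) := biprod.inr ≫ eqToHom h1.symm with hc
  have hback : S.push (eqToHom hA.symm) ρ = S.pull (eqToHom h1) φ := by
    rw [hρ, push_push, eqToHom_trans, eqToHom_refl, push_id]
  have hcρ : S.push (eqToHom hA.symm) (S.pull c ρ) = δ := by
    rw [hρ, pull_push, push_push, eqToHom_trans, eqToHom_refl, push_id,
      pull_pull, hc, Category.assoc, eqToHom_trans, eqToHom_refl,
      Category.comp_id, hφinr]
  obtain ⟨f, hf0, hfl, M, hM, hMdist⟩ := hS.ea2 X U ρ hA c hU (by rw [hcρ]; exact hX)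
  have hconeext : S.push (eqToHom hA.symm ≫ X.map 0) ρ = 0 := by
    rw [← push_push, hback, ← pull_push, hφd0, pull_zero]
  have hM0 : S.Dist M 0 := by
    have h' := hMdist
    rw [hconeext, pull_zero, push_zero] at h'
    exact h'
  obtain ⟨h, hh⟩ := (hS.ex_cov_last M 0 hM0 Z
      (biprod.inl ≫ eqToHom h1.symm ≫ eqToHom hM.hlast.symm)).mp (pull_zero _)
  rw [hM.maplast m rfl] at hh
  have hfl' : f.hom (m + 2) = c := hfl
  rw [hfl'] at hh
  have hh2 : h ≫ eqToHom (hM.hmid m (le_refl (m + 1))) ≫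
      biprod.desc c (U.map (m + 1)) ≫ eqToHom hM.hlast.symm =
      biprod.inl ≫ eqToHom h1.symm ≫ eqToHom hM.hlast.symm := hh
  have h2 : h ≫ eqToHom (hM.hmid m (le_refl (m + 1))) ≫
      biprod.desc c (U.map (m + 1)) = biprod.inl ≫ eqToHom h1.symm := by
    have h2' := congrArg (fun t => t ≫ eqToHom hM.hlast) hh2
    simpa [Category.assoc, eqToHom_trans, eqToHom_refl] using h2'
  have hcξ : S.pull c (S.pull (eqToHom h1) φ) = δ := by
    rw [pull_pull, hc, Category.assoc, eqToHom_trans, eqToHom_refl,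
      Category.comp_id, hφinr]
  have hUξ : S.pull (U.map (m + 1)) (S.pull (eqToHom h1) φ) = 0 := by
    rw [← hback, pull_push, pull_dlast hS hU, push_zero]
  have hRHS : S.pull (biprod.inl ≫ eqToHom h1.symm) (S.pull (eqToHom h1) φ) = θ := by
    rw [pull_pull, Category.assoc, eqToHom_trans, eqToHom_refl,
      Category.comp_id, hφinl]
  have h3 := congrArg (fun t => S.pull t (S.pull (eqToHom h1) φ)) h2
  rw [hRHS, biprod.desc_eq] at h3
  simp only [Preadditive.comp_add, pull_add_mor hS, ← pull_pull] at h3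
  rw [hcξ, hUξ] at h3
  simp only [pull_zero, add_zero] at h3
  simp only [pull_pull] at h3
  exact ⟨_, h3⟩


/-- Key lemma: exactness at `E(X_{n+1}, Z)`. -/
lemma q1 (hS : IsExangulated S) (hn : 0 < n)
    (X : ExSeq C) (δ : S.Ext (X.obj (n + 1)) (X.obj 0)) (hX : S.Dist X δ)
    (Z : C) (ε : S.Ext (X.obj (n + 1)) Z) (hε : S.pull (X.map n) ε = 0) :
    ∃ g : X.obj 0 ⟶ Z, S.push g δ = ε := by
  set ψ : S.Ext (X.obj (n + 1)) (Z ⊞ X.obj 0) :=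
    S.push biprod.inl ε + S.push biprod.inr δ with hψ
  obtain ⟨V, hv0, hv1, hV⟩ := hS.realize (Z ⊞ X.obj 0) (X.obj (n + 1)) ψ
  have hψfst : S.push biprod.fst ψ = ε := by
    rw [hψ, push_add, push_push, push_push, biprod.inl_fst, biprod.inr_fst,
      push_zero_mor hS, push_id, add_zero]
  have hψsnd : S.push biprod.snd ψ = δ := by
    rw [hψ, push_add, push_push, push_push, biprod.inl_snd, biprod.inr_snd,
      push_zero_mor hS, push_id, zero_add]
  have hψdn : S.pull (X.map n) ψ = 0 := by
    rw [hψ, pull_add, pull_push, pull_push, hε, pull_dlast hS hX, push_zero,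
      push_zero, add_zero]
  set ρ := S.push (eqToHom hv0.symm) (S.pull (eqToHom hv1) ψ) with hρ
  set a : V.obj 0 ⟶ X.obj 0 := eqToHom hv0 ≫ biprod.snd with ha
  have hback : S.push (eqToHom hv0) ρ = S.pull (eqToHom hv1) ψ := by
    rw [hρ, push_push, eqToHom_trans, eqToHom_refl, push_id]
  have hpullback : S.pull (eqToHom hv1.symm) ρ = S.push (eqToHom hv0.symm) ψ := by
    rw [hρ, pull_push, pull_pull, eqToHom_trans, eqToHom_refl, pull_id]
  have haρ : S.push a (S.pull (eqToHom hv1.symm) ρ) = δ := by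
    rw [hpullback, push_push, ha, ← Category.assoc, eqToHom_trans, eqToHom_refl,
      Category.id_comp, hψsnd]
  obtain ⟨g, hg0, hgl, N, hN, hNdist⟩ := hS.ea2op V X ρ hv1 a hV (by rw [haρ]; exact hX)
  have hNext : S.pull (eqToHom hN.hlast ≫ X.map n ≫ eqToHom hv1.symm) ρ = 0 := by
    simp only [← pull_pull]
    rw [hpullback, pull_push, hψdn]
    simp only [push_zero, pull_zero]
  have hN0 : S.Dist N 0 := by
    have h' := hNdist
    rw [hNext, push_zero] at h'
    exact h'
  obtain ⟨w, hw⟩ := (hS.ex_con_last N 0 hN0 Z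
      (eqToHom hN.h0 ≫ eqToHom hv0 ≫ biprod.fst)).mp (push_zero _)
  rw [hN.map0 hn, hg0] at hw
  have hw2 : biprod.lift (-(V.map 0)) a ≫ eqToHom (hN.hmid 0 hn).symm ≫ w =
      eqToHom hv0 ≫ biprod.fst := by
    have h' := congrArg (fun t => eqToHom hN.h0.symm ≫ t) hw
    simpa [eqToHom_trans, eqToHom_refl] using h'
  rw [biprod.lift_eq] at hw2
  simp only [Preadditive.add_comp, Preadditive.neg_comp, Category.assoc] at hw2
  have hpa : S.push a ρ = S.pull (eqToHom hv1) δ := by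
    rw [ha, ← push_push, hback, ← pull_push, hψsnd]
  have hpfst : S.push (eqToHom hv0 ≫ biprod.fst) ρ = S.pull (eqToHom hv1) ε := by
    rw [← push_push, hback, ← pull_push, hψfst]
  have h3 := congrArg (fun t => S.push t ρ) hw2
  rw [hpfst, push_add_mor hS, push_neg_mor hS] at h3
  simp only [← push_push] at h3
  rw [push_dzero hS hV] at h3
  simp only [push_zero, neg_zero, zero_add] at h3
  rw [hpa] at h3
  simp only [← pull_push, push_push] at h3
  have h4 := congrArg (S.pull (eqToHom hv1.symm)) h3
  simp only [pull_pull, eqToHom_trans, eqToHom_refl, pull_id] at h4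
  exact ⟨_, h4⟩


/-- Exactness at `E(Z, X₁)`. -/
lemma p2 (hS : IsExangulated S) (hn : 0 < n)
    (X : ExSeq C) (δ : S.Ext (X.obj (n + 1)) (X.obj 0)) (hX : S.Dist X δ)
    (Z : C) (ε : S.Ext Z (X.obj 1)) (hε : S.push (X.map 1) ε = 0) :
    ∃ ε₀ : S.Ext Z (X.obj 0), S.push (X.map 0) ε₀ = ε := by
  obtain ⟨Y, hy0, hy1, hY⟩ := hS.realize (X.obj 1) Z ε
  set ε' := S.push (eqToHom hy0.symm) (S.pull (eqToHom hy1) ε) with hε'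
  have hinf1 : S.IsInflation (X.map 0) := ⟨X, δ, hX, rfl, rfl, by simp⟩
  have hinf2 : S.IsInflation (eqToHom hy0.symm ≫ Y.map 0) :=
    ⟨Y, ε', hY, hy0, rfl, by simp⟩
  obtain ⟨G, γ, hG, hg0, hg1, hGmap⟩ := hS.comp_infl _ _ hinf1 hinf2
  have hθ : S.push (G.map 0) (S.push (eqToHom hg0.symm) δ) = 0 := by
    rw [push_push, hGmap]
    simp only [Category.assoc, eqToHom_trans_assoc, eqToHom_refl, Category.id_comp]
    simp only [← push_push]
    rw [push_dzero hS hX]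
    simp only [push_zero]
  obtain ⟨c, hc⟩ := p1 hS hn G γ hG (X.obj (n + 1)) (S.push (eqToHom hg0.symm) δ) hθ
  have hA : X.obj 0 = G.obj 0 := hg0.symm
  have hdist : S.push (eqToHom hA.symm) (S.pull c γ) = δ := by
    rw [hc, push_push, eqToHom_trans, eqToHom_refl, push_id]
  obtain ⟨f, hf0, hfl, M, hM, hMdist⟩ := hS.ea2 X G γ hA c hG (by rw [hdist]; exact hX)
  set μ := S.push (eqToHom hM.h0.symm)
    (S.pull (eqToHom hM.hlast) (S.push (eqToHom hA.symm ≫ X.map 0) γ)) with hμ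
  -- decompose f.hom 1
  have hsq : X.map 0 ≫ f.hom 1 =
      X.map 0 ≫ eqToHom hy0.symm ≫ Y.map 0 ≫ eqToHom hg1.symm := by
    have h' := f.comm 0 (by omega)
    rw [hf0, hGmap] at h'
    rw [h']
    simp only [Category.assoc, eqToHom_trans_assoc, eqToHom_refl, Category.id_comp]
  have hdiff : X.map 0 ≫
      (f.hom 1 - (eqToHom hy0.symm ≫ Y.map 0 ≫ eqToHom hg1.symm)) = 0 := by
    rw [Preadditive.comp_sub, hsq, sub_self]
  obtain ⟨w, hw⟩ := (hS.ex_con_mid X δ hX 0 hn (G.obj 1) _).mp hdiff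
  have hw' : X.map 1 ≫ w =
      f.hom 1 - (eqToHom hy0.symm ≫ Y.map 0 ≫ eqToHom hg1.symm) := hw
  have hf1 : f.hom 1 =
      (eqToHom hy0.symm ≫ Y.map 0 ≫ eqToHom hg1.symm) + X.map 1 ≫ w := by
    rw [hw']; abel
  have hYpush : S.push (Y.map 0) (S.push (eqToHom hy0.symm) ε) = 0 := by
    have h1 : S.push (Y.map 0) ε' = 0 :=
      (hS.ex_con_last Y ε' hY _ (Y.map 0)).mpr ⟨𝟙 _, Category.comp_id _⟩
    have h2 : S.pull (eqToHom hy1.symm) ε' = S.push (eqToHom hy0.symm) ε := by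
      rw [hε', pull_push, pull_pull, eqToHom_trans, eqToHom_refl, pull_id]
    rw [← h2, ← pull_push, h1, pull_zero]
  have hMθ : S.push (M.map 0) (S.push (eqToHom hM.h0.symm) ε) = 0 := by
    rw [push_push, hM.map0 hn]
    simp only [Category.assoc, eqToHom_trans_assoc, eqToHom_refl, Category.id_comp]
    rw [biprod.lift_eq, hf1]
    simp only [Preadditive.add_comp, Preadditive.neg_comp, Category.assoc]
    rw [push_add_mor hS, push_neg_mor hS, push_add_mor hS]
    simp only [← push_push]
    simp only [hε, hYpush, push_zero, neg_zero, zero_add, add_zero]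
  obtain ⟨u, hu⟩ := p1 hS hn M μ hMdist Z (S.push (eqToHom hM.h0.symm) ε) hMθ
  have hunf : S.push (eqToHom hM.h0) μ =
      S.pull (eqToHom hM.hlast) (S.push (eqToHom hA.symm ≫ X.map 0) γ) := by
    rw [hμ, push_push, eqToHom_trans, eqToHom_refl, push_id]
  have hε2 : S.push (eqToHom hM.h0) (S.push (eqToHom hM.h0.symm) ε) = ε := by
    rw [push_push, eqToHom_trans, eqToHom_refl, push_id]
  have h5 := congrArg (S.push (eqToHom hM.h0)) hu
  simp only [hμ, pull_push, push_push, pull_pull, Category.assoc, eqToHom_trans,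
    eqToHom_refl, Category.comp_id, push_id] at h5
  refine ⟨S.pull (u ≫ eqToHom hM.hlast) (S.push (eqToHom hA.symm) γ), ?_⟩
  simp only [pull_push, push_push]
  exact h5


/-- Exactness at `E(X_n, Z)`. -/
lemma q2 (hS : IsExangulated S) (hn : 0 < n)
    (X : ExSeq C) (δ : S.Ext (X.obj (n + 1)) (X.obj 0)) (hX : S.Dist X δ)
    (i : ℕ) (hi : i + 1 = n) (Z : C) (ε : S.Ext (X.obj (i + 1)) Z)
    (hε : S.pull (X.map i) ε = 0) :
    ∃ ε'' : S.Ext (X.obj (i + 2)) Z, S.pull (X.map (i + 1)) ε'' = ε := by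
  subst hi
  obtain ⟨V, hv0, hv1, hV⟩ := hS.realize Z (X.obj (i + 1)) ε
  set ε' := S.push (eqToHom hv0.symm) (S.pull (eqToHom hv1) ε) with hε'
  have hdef1 : S.IsDeflation (V.map (i + 1)) := ⟨V, ε', hV, rfl, rfl, by simp⟩
  have hdef2 : S.IsDeflation (eqToHom hv1 ≫ X.map (i + 1)) :=
    ⟨X, δ, hX, hv1.symm, rfl, by simp⟩
  obtain ⟨G, γ, hG, hgn, hgn1, hGmap⟩ := hS.comp_defl _ _ hdef1 hdef2
  have hθ : S.pull (G.map (i + 1)) (S.pull (eqToHom hgn1) δ) = 0 := by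
    rw [pull_pull, hGmap]
    simp only [Category.assoc, eqToHom_trans, eqToHom_refl, Category.comp_id]
    simp only [← pull_pull]
    rw [pull_dlast hS hX]
    simp only [pull_zero]
  obtain ⟨a, ha⟩ := q1 hS hn G γ hG (X.obj 0) (S.pull (eqToHom hgn1) δ) hθ
  have hdist : S.push a (S.pull (eqToHom hgn1.symm) γ) = δ := by
    rw [← pull_push, ha, pull_pull, eqToHom_trans, eqToHom_refl, pull_id]
  obtain ⟨g, hg0, hgl, N, hN, hNdist⟩ :=
    hS.ea2op G X γ hgn1 a hG (by rw [hdist]; exact hX)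
  set ν := S.push (eqToHom hN.h0.symm)
    (S.pull (eqToHom hN.hlast ≫ X.map (i + 1) ≫ eqToHom hgn1.symm) γ) with hν
  have hsq : G.map (i + 1) ≫ eqToHom hgn1 = g.hom (i + 1) ≫ X.map (i + 1) := by
    have h' := g.comm (i + 1) (le_refl _)
    rw [hgl] at h'
    exact h'
  have hdiff : (g.hom (i + 1) - eqToHom hgn ≫ V.map (i + 1) ≫ eqToHom hv1) ≫
      X.map (i + 1) = 0 := by
    rw [Preadditive.sub_comp, ← hsq, hGmap]
    simp only [Category.assoc, eqToHom_trans, eqToHom_refl, Category.comp_id,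
      eqToHom_trans_assoc, Category.id_comp, sub_self]
  obtain ⟨w, hw⟩ := (hS.ex_cov_mid X δ hX i (le_refl _) (G.obj (i + 1)) _).mp hdiff
  have hg1 : g.hom (i + 1) = eqToHom hgn ≫ V.map (i + 1) ≫ eqToHom hv1 +
      w ≫ X.map i := by
    rw [hw]; abel
  have hVpull : S.pull (V.map (i + 1)) (S.pull (eqToHom hv1) ε) = 0 := by
    have h1 : S.pull (V.map (i + 1)) ε' = 0 := pull_dlast hS hV
    have h2 : S.push (eqToHom hv0) ε' = S.pull (eqToHom hv1) ε := by
      rw [hε', push_push, eqToHom_trans, eqToHom_refl, push_id]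
    rw [← h2, pull_push, h1, push_zero]
  have hNθ : S.pull (N.map (i + 1)) (S.pull (eqToHom hN.hlast) ε) = 0 := by
    rw [hN.maplast i rfl, hg1, biprod.desc_eq]
    simp only [pull_pull, Category.assoc, eqToHom_trans, eqToHom_refl,
      Category.comp_id, Preadditive.comp_add, Preadditive.add_comp]
    simp only [pull_add_mor hS]
    simp only [← pull_pull]
    simp only [hε, hVpull, pull_zero, add_zero, zero_add]
  obtain ⟨q, hq⟩ := q1 hS hn N ν hNdist Z (S.pull (eqToHom hN.hlast) ε) hNθ
  refine ⟨S.pull (eqToHom hgn1.symm) (S.push (eqToHom hN.h0.symm ≫ q) γ), ?_⟩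
  have h5 := congrArg (S.pull (eqToHom hN.hlast.symm)) hq
  simp only [hν, pull_push, push_push, pull_pull, Category.assoc, eqToHom_trans,
    eqToHom_trans_assoc, eqToHom_refl, Category.comp_id, Category.id_comp,
    pull_id] at h5
  simp only [pull_pull, pull_push]
  exact h5

end ExData

end LongExactInfra

/-- The long exact sequences associated to a distinguished
`n`-exangle, together with the weak cokernel/weak kernel consequences. -/
theorem dist_nExangle_long_exact
    {n : ℕ} (hn : 0 < n) {C : Type u} [Category.{v} C] [Preadditive C]
    [HasZeroObject C] [HasBinaryBiproducts C]
    (S : ExData n C) (hS : IsExangulated S)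
    (X : ExSeq C) (δ : S.Ext (X.obj (n + 1)) (X.obj 0)) (hX : S.Dist X δ) :
    -- exactness of C(Y,A₀) → ⋯ → C(Y,A_{n+1}) → E(Y,A₀) → E(Y,A₁) → E(Y,A₂)
    ((∀ i, i + 1 ≤ n → ∀ (Z : C) (g : Z ⟶ X.obj (i + 1)),
        (g ≫ X.map (i + 1) = 0 ↔ ∃ h : Z ⟶ X.obj i, h ≫ X.map i = g)) ∧
      (∀ (Z : C) (g : Z ⟶ X.obj (n + 1)),
        (S.pull g δ = 0 ↔ ∃ h : Z ⟶ X.obj n, h ≫ X.map n = g)) ∧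
      (∀ (Z : C) (ε : S.Ext Z (X.obj 0)),
        (S.push (X.map 0) ε = 0 ↔ ∃ f : Z ⟶ X.obj (n + 1), S.pull f δ = ε)) ∧
      (∀ (Z : C) (ε : S.Ext Z (X.obj 1)),
        (S.push (X.map 1) ε = 0 ↔ ∃ ε₀ : S.Ext Z (X.obj 0), S.push (X.map 0) ε₀ = ε))) ∧
    -- exactness of C(A_{n+1},Y) → ⋯ → C(A₀,Y) → E(A_{n+1},Y) → E(Aₙ,Y) → E(A_{n-1},Y)
    ((∀ i, i + 1 ≤ n → ∀ (Z : C) (g : X.obj (i + 1) ⟶ Z),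
        (X.map i ≫ g = 0 ↔ ∃ h : X.obj (i + 2) ⟶ Z, X.map (i + 1) ≫ h = g)) ∧
      (∀ (Z : C) (g : X.obj 0 ⟶ Z),
        (S.push g δ = 0 ↔ ∃ h : X.obj 1 ⟶ Z, X.map 0 ≫ h = g)) ∧
      (∀ (Z : C) (ε : S.Ext (X.obj (n + 1)) Z),
        (S.pull (X.map n) ε = 0 ↔ ∃ g : X.obj 0 ⟶ Z, S.push g δ = ε)) ∧
      (∀ i, i + 1 = n → ∀ (Z : C) (ε : S.Ext (X.obj (i + 1)) Z),
        (S.pull (X.map i) ε = 0 ↔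
          ∃ ε' : S.Ext (X.obj (i + 2)) Z, S.pull (X.map (i + 1)) ε' = ε))) ∧
    -- in particular: weak cokernels and weak kernels
    (∀ i, i + 1 ≤ n → IsWeakCokernel (X.map i) (X.map (i + 1)) ∧
      IsWeakKernel (X.map i) (X.map (i + 1))) := by
  refine ⟨⟨hS.ex_cov_mid X δ hX, hS.ex_cov_last X δ hX,
      fun Z ε => ⟨ExData.p1 hS hn X δ hX Z ε, ?_⟩,
      fun Z ε => ⟨ExData.p2 hS hn X δ hX Z ε, ?_⟩⟩,
    ⟨hS.ex_con_mid X δ hX, hS.ex_con_last X δ hX,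
      fun Z ε => ⟨ExData.q1 hS hn X δ hX Z ε, ?_⟩,
      fun i hi Z ε => ⟨ExData.q2 hS hn X δ hX i hi Z ε, ?_⟩⟩,
    fun i hi => ⟨⟨ExData.d_comp_d hS hX i hi,
        fun Z h hh => (hS.ex_con_mid X δ hX i hi Z h).mp hh⟩,
      ⟨ExData.d_comp_d hS hX i hi,
        fun Z h hh => (hS.ex_cov_mid X δ hX i hi Z h).mp hh⟩⟩⟩
  · rintro ⟨f, rfl⟩
    rw [← ExData.pull_push, ExData.push_dzero hS hX, ExData.pull_zero]
  · rintro ⟨ε₀, rfl⟩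
    have h01 : X.map 0 ≫ X.map 1 = 0 := ExData.d_comp_d hS hX 0 hn
    rw [ExData.push_push, h01, ExData.push_zero_mor hS]
  · rintro ⟨g, rfl⟩
    rw [ExData.pull_push, ExData.pull_dlast hS hX, ExData.push_zero]
  · rintro ⟨ε', rfl⟩
    have hdd : X.map i ≫ X.map (i + 1) = 0 :=
      ExData.d_comp_d hS hX i (by omega)
    rw [ExData.pull_pull, hdd, ExData.pull_zero_mor hS]
end

section
/- Let (C,E,s) be an n-exangulated category and let (f_0, f_1, …, f_{n+1}) be a morphism of distinguished n-exangles from A_0 --α_0--> A_1 → ⋯ → A_n --α_n--> A_{n+1} ⇢δ to B_0 --β_0--> B_1 → ⋯ → B_n --β_n--> B_{n+1} ⇢δ' (so f_{i+1} ∘ α_i = β_i ∘ f_i for all 0 ≤ i ≤ n, and (f_0)_*δ = (f_{n+1})^*δ'). Then the following are equivalent: (i) f_0 factors through α_0; (ii) (f_0)_*δ = (f_{n+1})^*δ' = 0; (iii) f_{n+1} factors through β_n. In particular, taking δ = δ' and the identity morphism (id_{A_0}, id_{A_1}, …, id_{A_{n+1}}), one gets: α_0 is a split monomorphism (section) if and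 only if δ = 0 if and only if α_n is a split epimorphism (retraction). -/
open CategoryTheory CategoryTheory.Limits Opposite ZeroObject

universe v u

/-- For a morphism `(f₀,…,f_{n+1})` of distinguished
`n`-exangles, the following are equivalent: `f₀` factors through `α₀`;
`(f₀)_*δ = (f_{n+1})^*δ' = 0`; `f_{n+1}` factors through `βₙ`. In particular,
for the identity morphism of a distinguished `n`-exangle: `α₀` is a section iff
`δ = 0` iff `αₙ` is a retraction. -/
theorem factor_through_iff_pushforward_zero
    {n : ℕ} (hn : 0 < n) {C : Type u} [Category.{v} C] [Preadditive C]
    [HasZeroObject C] [HasBinaryBiproducts C]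
    (S : ExData n C) (hS : IsExangulated S)
    (X Y : ExSeq C) (δ : S.Ext (X.obj (n + 1)) (X.obj 0))
    (δ' : S.Ext (Y.obj (n + 1)) (Y.obj 0))
    (hX : S.Dist X δ) (hY : S.Dist Y δ')
    (f : ExSeqHom n X Y)
    (hf : S.push (f.hom 0) δ = S.pull (f.hom (n + 1)) δ') :
    ((∃ r : X.obj 1 ⟶ Y.obj 0, X.map 0 ≫ r = f.hom 0) ↔ S.push (f.hom 0) δ = 0) ∧
    (S.push (f.hom 0) δ = 0 ↔
      ∃ r : X.obj (n + 1) ⟶ Y.obj n, r ≫ Y.map n = f.hom (n + 1)) ∧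
    -- the particular case of the identity morphism
    (∀ (W : ExSeq C) (ρ : S.Ext (W.obj (n + 1)) (W.obj 0)), S.Dist W ρ →
      (((∃ r : W.obj 1 ⟶ W.obj 0, W.map 0 ≫ r = 𝟙 (W.obj 0)) ↔ ρ = 0) ∧
        (ρ = 0 ↔ ∃ s : W.obj (n + 1) ⟶ W.obj n, s ≫ W.map n = 𝟙 (W.obj (n + 1))))) := by
  refine ⟨(hS.ex_con_last X δ hX (Y.obj 0) (f.hom 0)).symm, ?_, ?_⟩
  · rw [hf]
    exact hS.ex_cov_last Y δ' hY (X.obj (n + 1)) (f.hom (n + 1))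
  · intro W ρ hW
    have hp : S.push (𝟙 (W.obj 0)) ρ = ρ := by
      simp [ExData.push]
    have hq : S.pull (𝟙 (W.obj (n + 1))) ρ = ρ := by
      simp [ExData.pull]
    constructor
    · rw [← hp]
      exact (hS.ex_con_last W ρ hW (W.obj 0) (𝟙 (W.obj 0))).symm
    · rw [← hq]
      exact hS.ex_cov_last W ρ hW (W.obj (n + 1)) (𝟙 (W.obj (n + 1)))
end
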